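/- arXiv:0910.0120 — 4 statements merged into one kernel-verified Lean document; each statement's English description precedes it below -/
import Mathlib

section
/- Let F(x) = x + \sum_{n\ge 2} e_n x^n with e_n = \prod_{i=2}^{n-1}(i-q), and let F_\delta(y) = \sum_{n\ge 1} a_n y^n be its compositional inverse (so a_1 = 1). Then the coefficients satisfy, for all n \ge 2: a_n = -\sum_{k+l=n+1, k,l\ge 2} k a_k a_l + \sum_{k+l=n} (qk - 1) a_k a_l - q \sum_{k+l+m=n+1} k a_k a_l a_m. -/
open PowerSeries Finset

/-- Composition of formal power series (intended for second argument with zero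
constant coefficient). -/
noncomputable def PS.comp {R : Type*} [CommRing R] (f g : PowerSeries R) : PowerSeries R :=
  PowerSeries.mk fun n => ∑ k ∈ Finset.range (n + 1), (coeff k f) * coeff n (g ^ k)

/-- `F(x) = x + ∑_{n ≥ 2} (∏_{i=2}^{n-1}(i - q)) xⁿ`. -/
noncomputable def FSeries : PowerSeries (Polynomial ℚ) :=
  PowerSeries.mk fun n =>
    if n = 0 then 0 else ∏ i ∈ Finset.Icc 2 (n - 1), ((i : Polynomial ℚ) - Polynomial.X)

variable {R : Type*} [CommRing R]

lemma coeff_pow_eq_zero {g : PowerSeries R} (hg : constantCoeff g = 0)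
    {n k : ℕ} (h : n < k) : coeff n (g ^ k) = 0 := by
  have h1 : (PowerSeries.X : PowerSeries R) ∣ g := PowerSeries.X_dvd_iff.mpr hg
  exact (PowerSeries.X_pow_dvd_iff.mp (pow_dvd_pow_of_dvd h1 k)) n h

lemma coeff_eval₂ {g : PowerSeries R} (hg : constantCoeff g = 0)
    (P : Polynomial R) (n : ℕ) :
    coeff n (P.eval₂ C g) = ∑ k ∈ range (n + 1), P.coeff k * coeff n (g ^ k) := by
  rw [Polynomial.eval₂_eq_sum_range, map_sum]
  simp only [map_mul, coeff_C_mul]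
  rw [Finset.sum_subset (Finset.range_subset_range.mpr (le_max_left (P.natDegree + 1) (n + 1)))
      (fun k _ hk => by
        rw [Polynomial.coeff_eq_zero_of_natDegree_lt
          (Nat.lt_of_succ_le (Nat.le_of_not_lt (Finset.mem_range.not.mp hk))), zero_mul]),
    Finset.sum_subset (Finset.range_subset_range.mpr (le_max_right (P.natDegree + 1) (n + 1)))
      (fun k _ hk => by
        rw [coeff_pow_eq_zero hg
          (Nat.lt_of_succ_le (Nat.le_of_not_lt (Finset.mem_range.not.mp hk))), mul_zero])]

lemma coeff_eval₂_comp {f g : PowerSeries R} (hg : constantCoeff g = 0)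
    {P : Polynomial R} {n : ℕ} (hP : ∀ k ≤ n, P.coeff k = coeff k f) :
    coeff n (P.eval₂ C g) = coeff n (PS.comp f g) := by
  rw [coeff_eval₂ hg, PS.comp, coeff_mk]
  exact Finset.sum_congr rfl fun k hk => by
    rw [hP k (Nat.lt_succ_iff.mp (Finset.mem_range.mp hk))]

lemma coeff_trunc_eval₂ {f g : PowerSeries R} (hg : constantCoeff g = 0)
    {n m : ℕ} (h : n < m) :
    coeff n ((trunc m f).eval₂ C g) = coeff n (PS.comp f g) := by
  refine coeff_eval₂_comp hg fun k hk => ?_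
  rw [coeff_trunc]
  exact if_pos (lt_of_le_of_lt hk h)

lemma PS.comp_add (f₁ f₂ g : PowerSeries R) :
    PS.comp (f₁ + f₂) g = PS.comp f₁ g + PS.comp f₂ g := by
  ext n
  simp [PS.comp, Finset.sum_add_distrib, add_mul]

lemma PS.comp_sub (f₁ f₂ g : PowerSeries R) :
    PS.comp (f₁ - f₂) g = PS.comp f₁ g - PS.comp f₂ g := by
  ext n
  simp [PS.comp, Finset.sum_sub_distrib, sub_mul]

lemma PS.comp_C (r : R) (g : PowerSeries R) : PS.comp (C r) g = C r := by
  ext n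
  simp only [PS.comp, coeff_mk, coeff_C]
  rw [Finset.sum_eq_single 0]
  · simp [coeff_one]
  · intro k _ hk; simp [hk]
  · simp

lemma PS.comp_X {g : PowerSeries R} (hg : constantCoeff g = 0) :
    PS.comp PowerSeries.X g = g := by
  ext n
  simp only [PS.comp, coeff_mk, coeff_X]
  rw [Finset.sum_eq_single 1]
  · simp
  · intro k _ hk; simp [hk]
  · intro h
    simp only [Finset.mem_range, Nat.lt_succ_iff] at h
    have : n = 0 := by omega
    subst this
    simp [hg, coeff_zero_eq_constantCoeff]

lemma PS.comp_mul {g : PowerSeries R} (hg : constantCoeff g = 0) (f₁ f₂ : PowerSeries R) :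
    PS.comp (f₁ * f₂) g = PS.comp f₁ g * PS.comp f₂ g := by
  ext n
  have h1 : coeff n (PS.comp (f₁ * f₂) g)
      = coeff n ((trunc (n+1) f₁ * trunc (n+1) f₂).eval₂ C g) := by
    refine (coeff_eval₂_comp hg (fun k hk => ?_)).symm
    rw [Polynomial.coeff_mul, PowerSeries.coeff_mul]
    refine Finset.sum_congr rfl fun p hp => ?_
    have hp' := Finset.HasAntidiagonal.mem_antidiagonal.mp hp
    rw [coeff_trunc, coeff_trunc, if_pos (by omega), if_pos (by omega)]
  rw [h1, Polynomial.eval₂_mul, PowerSeries.coeff_mul, PowerSeries.coeff_mul]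
  refine Finset.sum_congr rfl fun p hp => ?_
  have hp' := Finset.HasAntidiagonal.mem_antidiagonal.mp hp
  rw [coeff_trunc_eval₂ hg (by omega), coeff_trunc_eval₂ hg (by omega)]

lemma coeff_derivativeFun' (f : PowerSeries R) (n : ℕ) :
    coeff n (derivativeFun f) = coeff (n + 1) f * (n + 1) :=
  coeff_derivative f n

lemma derivativeFun_C' (r : R) : derivativeFun (C r : PowerSeries R) = 0 :=
  derivative_C

lemma derivativeFun_pow (g : PowerSeries R) (k : ℕ) :
    derivativeFun (g ^ k) = (k : PowerSeries R) * g ^ (k - 1) * derivativeFun g := by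
  have := Derivation.leibniz_pow (PowerSeries.derivative (R := R)) (a := g) k
  rw [show ((PowerSeries.derivative (R := R)) (g ^ k) : PowerSeries R) = derivativeFun (g^k) from rfl] at this
  rw [this, smul_eq_mul, nsmul_eq_mul, mul_assoc]
  rfl

lemma derivativeFun_eval₂ (g : PowerSeries R) (P : Polynomial R) :
    derivativeFun (P.eval₂ C g) =
      (Polynomial.derivative P).eval₂ C g * derivativeFun g := by
  induction P using Polynomial.induction_on' with
  | add p q hp hq =>
      rw [Polynomial.eval₂_add, derivativeFun_add, hp, hq, Polynomial.derivative_add,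
        Polynomial.eval₂_add, add_mul]
  | monomial k a =>
      rw [Polynomial.eval₂_monomial, Polynomial.derivative_monomial, Polynomial.eval₂_monomial]
      rw [derivativeFun_mul, derivativeFun_C', derivativeFun_pow]
      push_cast
      ring_nf
      simp [smul_eq_mul]
      ring

lemma derivativeFun_comp {g : PowerSeries R} (hg : constantCoeff g = 0) (f : PowerSeries R) :
    derivativeFun (PS.comp f g) = PS.comp (derivativeFun f) g * derivativeFun g := by
  ext n
  rw [coeff_derivativeFun', ← coeff_trunc_eval₂ (f := f) hg (Nat.lt_succ_self (n+1)),
    ← coeff_derivativeFun', derivativeFun_eval₂, PowerSeries.coeff_mul, PowerSeries.coeff_mul]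
  refine Finset.sum_congr rfl fun p hp => ?_
  have hp' := Finset.HasAntidiagonal.mem_antidiagonal.mp hp
  congr 1
  refine coeff_eval₂_comp hg fun k hk => ?_
  rw [Polynomial.coeff_derivative, coeff_trunc, if_pos (by omega), coeff_derivativeFun']


lemma FSeries_ODE :
    FSeries = PowerSeries.X + PowerSeries.C Polynomial.X * PowerSeries.X ^ 2
      + PowerSeries.X ^ 2 * derivativeFun FSeries
      - PowerSeries.C Polynomial.X * PowerSeries.X * FSeries := by
  apply PowerSeries.ext; intro n
  have hC : PowerSeries.C Polynomial.X * PowerSeries.X * FSeries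
      = PowerSeries.C Polynomial.X * (PowerSeries.X ^ 1 * FSeries) := by
    ring
  rw [map_sub, map_add, map_add, hC, coeff_C_mul, coeff_C_mul, coeff_X_pow,
    coeff_X_pow_mul', coeff_X_pow_mul', coeff_X]
  simp only [FSeries, coeff_mk]
  rcases n with _ | _ | _ | n
  · norm_num
  · norm_num
  · norm_num [coeff_derivativeFun', coeff_mk]
  · rw [if_neg (show ¬n + 3 = 0 by omega), if_neg (show ¬n + 3 = 1 by omega),
      if_neg (show ¬n + 3 = 2 by omega), if_pos (show 2 ≤ n + 3 by omega),
      if_pos (show 1 ≤ n + 3 by omega)]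
    rw [show n + 3 - 2 = n + 1 from rfl, coeff_derivativeFun', coeff_mk,
      if_neg (show ¬n + 1 + 1 = 0 by omega), if_neg (show ¬n + 3 - 1 = 0 by omega)]
    rw [show n + 1 + 1 - 1 = n + 1 from rfl, show n + 3 - 1 = n + 2 from rfl,
      show n + 2 - 1 = n + 1 from rfl]
    rw [Finset.prod_Icc_succ_top (show 2 ≤ n + 2 by omega)]
    push_cast
    ring

lemma coeff_mul_mul (f g h : PowerSeries R) (m : ℕ) :
    coeff m (f * g * h) =
      ∑ t ∈ (range (m+1) ×ˢ range (m+1) ×ˢ range (m+1)).filter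
          (fun t => t.1 + t.2.1 + t.2.2 = m),
        coeff t.1 f * coeff t.2.1 g * coeff t.2.2 h := by
  rw [PowerSeries.coeff_mul]
  have : ∀ p ∈ antidiagonal m, coeff p.1 (f * g) * coeff p.2 h
      = ∑ q ∈ antidiagonal p.1, coeff q.1 f * coeff q.2 g * coeff p.2 h := by
    intro p _
    rw [PowerSeries.coeff_mul, Finset.sum_mul]
  rw [Finset.sum_congr rfl this, Finset.sum_sigma']
  refine Finset.sum_nbij' (fun x => (x.2.1, x.2.2, x.1.2))
    (fun t => ⟨(t.1 + t.2.1, t.2.2), (t.1, t.2.1)⟩) ?_ ?_ ?_ ?_ ?_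
  · rintro ⟨⟨p1, p2⟩, ⟨q1, q2⟩⟩ hx
    simp only [Finset.mem_sigma, Finset.HasAntidiagonal.mem_antidiagonal] at hx
    simp only [Finset.mem_filter, Finset.mem_product, Finset.mem_range]
    omega
  · rintro ⟨t1, t2, t3⟩ ht
    simp at ht
    simp only [Finset.mem_sigma, Finset.HasAntidiagonal.mem_antidiagonal]
    exact ⟨by omega, trivial⟩
  · rintro ⟨⟨p1, p2⟩, ⟨q1, q2⟩⟩ hx
    simp only [Finset.mem_sigma, Finset.HasAntidiagonal.mem_antidiagonal] at hx
    simp only [Sigma.mk.inj_iff, Prod.mk.injEq, heq_eq_eq]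
    exact ⟨⟨hx.2, trivial⟩, trivial⟩
  · rintro ⟨t1, t2, t3⟩ _
    rfl
  · rintro ⟨⟨p1, p2⟩, ⟨q1, q2⟩⟩ _
    rfl


theorem inverse_coeff_recurrence (Fδ : PowerSeries (Polynomial ℚ))
    (h0 : coeff 0 Fδ = 0) (h1 : coeff 1 Fδ = 1)
    (hl : PS.comp Fδ FSeries = PowerSeries.X)
    (hr : PS.comp FSeries Fδ = PowerSeries.X)
    (a : ℕ → Polynomial ℚ) (ha : ∀ n, a n = coeff n Fδ) :
    ∀ n, 2 ≤ n →
      a n =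
        -(∑ p ∈ (Finset.HasAntidiagonal.antidiagonal (n + 1)).filter (fun p => 2 ≤ p.1 ∧ 2 ≤ p.2),
            (p.1 : Polynomial ℚ) * a p.1 * a p.2)
        + (∑ p ∈ (Finset.HasAntidiagonal.antidiagonal n).filter (fun p => 1 ≤ p.1 ∧ 1 ≤ p.2),
            (Polynomial.X * (p.1 : Polynomial ℚ) - 1) * a p.1 * a p.2)
        - Polynomial.X *
          (∑ t ∈ (Finset.Icc 1 n ×ˢ Finset.Icc 1 n ×ˢ Finset.Icc 1 n).filter
              (fun t => t.1 + t.2.1 + t.2.2 = n + 1),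
            (t.1 : Polynomial ℚ) * a t.1 * a t.2.1 * a t.2.2) := by
  intro n hn
  have hg : constantCoeff Fδ = 0 := by
    rw [← coeff_zero_eq_constantCoeff_apply]; exact h0
  set D := derivativeFun Fδ with hD
  set G := PS.comp (derivativeFun FSeries) Fδ with hG
  -- substituted ODE
  have h2 : PS.comp (PowerSeries.X ^ 2) Fδ = Fδ ^ 2 := by
    rw [pow_two, PS.comp_mul hg, PS.comp_X hg, ← pow_two]
  have hsub : (PowerSeries.X : PowerSeries (Polynomial ℚ))
      = Fδ + PowerSeries.C Polynomial.X * Fδ ^ 2 + Fδ ^ 2 * G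
        - PowerSeries.C Polynomial.X * Fδ * PowerSeries.X := by
    conv_lhs => rw [← hr, FSeries_ODE]
    rw [PS.comp_sub, PS.comp_add, PS.comp_add, PS.comp_mul hg, PS.comp_mul hg,
      PS.comp_mul hg, PS.comp_mul hg, PS.comp_C, PS.comp_X hg, h2, hr]
  -- chain rule consequence
  have hGD : G * D = 1 := by
    have hc := derivativeFun_comp hg FSeries
    rw [hr] at hc
    rw [hG, hD, ← hc]
    exact PowerSeries.derivative_X
  -- key equation
  have key : PowerSeries.X * D
      = Fδ * D + PowerSeries.C Polynomial.X * (Fδ ^ 2 * D) + Fδ ^ 2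
        - PowerSeries.C Polynomial.X * (Fδ * (PowerSeries.X * D)) := by
    calc PowerSeries.X * D
        = (Fδ + PowerSeries.C Polynomial.X * Fδ ^ 2 + Fδ ^ 2 * G
            - PowerSeries.C Polynomial.X * Fδ * PowerSeries.X) * D := by rw [← hsub]
      _ = Fδ * D + PowerSeries.C Polynomial.X * (Fδ ^ 2 * D) + Fδ ^ 2 * (G * D)
            - PowerSeries.C Polynomial.X * (Fδ * (PowerSeries.X * D)) := by ring
      _ = _ := by rw [hGD, mul_one]
  have ha0 : a 0 = 0 := by rw [ha]; exact h0
  have ha1 : a 1 = 1 := by rw [ha]; exact h1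
  have cXD : ∀ k : ℕ, coeff k (PowerSeries.X * D) = (k : Polynomial ℚ) * a k := by
    intro k
    cases k with
    | zero =>
        simp [coeff_zero_eq_constantCoeff_apply, map_mul]
    | succ m =>
        rw [coeff_succ_X_mul, hD, coeff_derivativeFun', ha]
        push_cast
        ring
  have expandW : ∀ m : ℕ, coeff m (PowerSeries.X * D * Fδ)
      = ∑ p ∈ Finset.HasAntidiagonal.antidiagonal m, (p.1 : Polynomial ℚ) * a p.1 * a p.2 := by
    intro m
    rw [PowerSeries.coeff_mul]
    exact Finset.sum_congr rfl fun p _ => by rw [cXD p.1, ← ha p.2]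
  have E := congrArg (coeff n) key
  rw [map_sub, map_add, map_add, coeff_C_mul, coeff_C_mul, cXD n] at E
  have e2 : coeff n (Fδ * D)
      = coeff (n+1) (PowerSeries.X * D * Fδ) := by
    rw [show PowerSeries.X * D * Fδ = PowerSeries.X * (Fδ * D) by ring, coeff_succ_X_mul]
  have e3 : coeff n (Fδ ^ 2 * D)
      = coeff (n+1) (PowerSeries.X * D * Fδ * Fδ) := by
    rw [show PowerSeries.X * D * Fδ * Fδ = PowerSeries.X * (Fδ ^ 2 * D) by ring,
      coeff_succ_X_mul]
  have e4 : coeff n (Fδ * (PowerSeries.X * D))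
      = coeff n (PowerSeries.X * D * Fδ) := by
    rw [show PowerSeries.X * D * Fδ = Fδ * (PowerSeries.X * D) by ring]
  rw [e2, e3, e4, show (Fδ : PowerSeries (Polynomial ℚ)) ^ 2 = Fδ * Fδ from sq Fδ] at E
  have hS1 : ∑ p ∈ (Finset.HasAntidiagonal.antidiagonal (n + 1)).filter (fun p => 2 ≤ p.1 ∧ 2 ≤ p.2),
      (p.1 : Polynomial ℚ) * a p.1 * a p.2
      = coeff (n+1) (PowerSeries.X * D * Fδ)
        - ((n : Polynomial ℚ) + 1) * a n := by
    rw [expandW (n+1),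
      ← Finset.sum_filter_add_sum_filter_not (Finset.HasAntidiagonal.antidiagonal (n+1))
        (fun p => 2 ≤ p.1 ∧ 2 ≤ p.2)]
    have hset : (Finset.HasAntidiagonal.antidiagonal (n+1)).filter (fun p => ¬(2 ≤ p.1 ∧ 2 ≤ p.2))
        = {((0 : ℕ), n+1), (1, n), (n, 1), (n+1, 0)} := by
      ext ⟨i, j⟩
      simp only [Finset.mem_filter, Finset.HasAntidiagonal.mem_antidiagonal, Finset.mem_insert,
        Finset.mem_singleton, Prod.mk.injEq]
      omega
    rw [hset,
      Finset.sum_insert (by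
        simp only [Finset.mem_insert, Finset.mem_singleton, Prod.mk.injEq, not_or]
        omega),
      Finset.sum_insert (by
        simp only [Finset.mem_insert, Finset.mem_singleton, Prod.mk.injEq, not_or]
        omega),
      Finset.sum_insert (by
        simp only [Finset.mem_singleton, Prod.mk.injEq, not_or]
        omega),
      Finset.sum_singleton]
    rw [ha0, ha1]
    push_cast
    ring
  have hS2 : ∑ p ∈ (Finset.HasAntidiagonal.antidiagonal n).filter (fun p => 1 ≤ p.1 ∧ 1 ≤ p.2),
      (Polynomial.X * (p.1 : Polynomial ℚ) - 1) * a p.1 * a p.2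
      = Polynomial.X * coeff n (PowerSeries.X * D * Fδ)
        - coeff n (Fδ * Fδ) := by
    rw [expandW n, PowerSeries.coeff_mul, Finset.mul_sum, ← Finset.sum_sub_distrib]
    have hR : ∑ p ∈ Finset.HasAntidiagonal.antidiagonal n,
        (Polynomial.X * ((p.1 : Polynomial ℚ) * a p.1 * a p.2)
          - coeff p.1 Fδ * coeff p.2 Fδ)
        = ∑ p ∈ Finset.HasAntidiagonal.antidiagonal n,
          (Polynomial.X * (p.1 : Polynomial ℚ) - 1) * a p.1 * a p.2 :=
      Finset.sum_congr rfl fun p _ => by rw [← ha, ← ha]; ring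
    rw [hR]
    refine Finset.sum_filter_of_ne fun p hp hne => ?_
    by_contra hc
    apply hne
    have hz : p.1 = 0 ∨ p.2 = 0 := by omega
    rcases hz with h | h <;> rw [h] <;> simp [ha0]
  have hS3 : ∑ t ∈ (Finset.Icc 1 n ×ˢ Finset.Icc 1 n ×ˢ Finset.Icc 1 n).filter
        (fun t => t.1 + t.2.1 + t.2.2 = n + 1),
      (t.1 : Polynomial ℚ) * a t.1 * a t.2.1 * a t.2.2
      = coeff (n+1) (PowerSeries.X * D * Fδ * Fδ) := by
    rw [coeff_mul_mul]
    have hR : ∑ t ∈ (Finset.range (n+1+1) ×ˢ Finset.range (n+1+1) ×ˢ Finset.range (n+1+1)).filter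
          (fun t => t.1 + t.2.1 + t.2.2 = n + 1),
        coeff t.1 (PowerSeries.X * D)
          * coeff t.2.1 Fδ * coeff t.2.2 Fδ
        = ∑ t ∈ (Finset.range (n+1+1) ×ˢ Finset.range (n+1+1) ×ˢ Finset.range (n+1+1)).filter
          (fun t => t.1 + t.2.1 + t.2.2 = n + 1),
          (t.1 : Polynomial ℚ) * a t.1 * a t.2.1 * a t.2.2 :=
      Finset.sum_congr rfl fun t _ => by rw [cXD t.1, ← ha t.2.1, ← ha t.2.2]
    rw [hR]
    refine Finset.sum_subset ?_ ?_
    · intro t ht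
      simp only [Finset.mem_filter, Finset.mem_product, Finset.mem_Icc] at ht
      simp only [Finset.mem_filter, Finset.mem_product, Finset.mem_range]
      omega
    · intro t ht hnt
      simp only [Finset.mem_filter, Finset.mem_product, Finset.mem_range] at ht
      simp only [Finset.mem_filter, Finset.mem_product, Finset.mem_Icc] at hnt
      have hz : t.1 = 0 ∨ t.2.1 = 0 ∨ t.2.2 = 0 := by omega
      rcases hz with h | h | h <;> rw [h] <;> simp [ha0]
  rw [hS1, hS2, hS3]
  linear_combination -E
end

section
/- Let b_n be defined by b_0 = 0, b_1 = -1, and for n \ge 2, b_n = \sum_{k+l=n+1, k,l \ge 2} k b_k b_l + \sum_{k+l=n} b_k b_l. Then the formal power series G(x) = -\sum_{n\ge 1} b_n x^n is the compositional inverse of the series \sum_{n\ge 1} (n-1)! x^n. -/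
open PowerSeries Finset

/-- `H(x) = ∑_{n ≥ 1} (n-1)! xⁿ = x + x² + 2x³ + 6x⁴ + ⋯`. -/
noncomputable def HSeries : PowerSeries ℚ :=
  PowerSeries.mk fun n => if n = 0 then 0 else ((n - 1).factorial : ℚ)

namespace PSAux

lemma coeff_comp (f g : PowerSeries ℚ) (n : ℕ) :
    coeff n (PS.comp f g) = ∑ k ∈ Finset.range (n + 1), (coeff k f) * coeff n (g ^ k) := by
  simp [PS.comp]

lemma coeff_pow_lt {g : PowerSeries ℚ} (hg : coeff 0 g = 0) {n k : ℕ} (h : n < k) :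
    coeff n (g ^ k) = 0 := by
  have hx : (X : PowerSeries ℚ) ∣ g := X_dvd_iff.mpr (by rwa [coeff_zero_eq_constantCoeff_apply] at hg)
  obtain ⟨h', hp⟩ := pow_dvd_pow_of_dvd hx k
  rw [hp, mul_comm, coeff_mul_X_pow']
  simp [Nat.not_le.mpr h]

/-- S1 -/
lemma coeff_aeval {g : PowerSeries ℚ} (hg : coeff 0 g = 0) (p : Polynomial ℚ) (m : ℕ) :
    coeff m (Polynomial.aeval g p) =
      ∑ i ∈ Finset.range (m + 1), p.coeff i * coeff m (g ^ i) := by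
  have hN : p.natDegree < max (p.natDegree + 1) (m + 1) :=
    lt_of_lt_of_le (Nat.lt_succ_self _) (le_max_left _ _)
  rw [Polynomial.aeval_eq_sum_range' hN, map_sum]
  have hterm : ∀ i : ℕ, coeff m (p.coeff i • g ^ i) = p.coeff i * coeff m (g ^ i) :=
    fun i => by rw [LinearMap.map_smul, smul_eq_mul]
  simp_rw [hterm]
  refine (Finset.sum_subset (Finset.range_subset_range.mpr (le_max_right _ _)) fun i _ hi => ?_).symm
  have hmi : m < i := by simp only [Finset.mem_range, not_lt] at hi; omega
  rw [coeff_pow_lt hg hmi, mul_zero]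

/-- S2 -/
lemma coeff_comp_eq_aeval_trunc {g : PowerSeries ℚ} (hg : coeff 0 g = 0)
    (f : PowerSeries ℚ) {m N : ℕ} (hmN : m < N) :
    coeff m (PS.comp f g) = coeff m (Polynomial.aeval g (trunc N f)) := by
  rw [coeff_comp, coeff_aeval hg]
  refine Finset.sum_congr rfl fun i hi => ?_
  rw [coeff_trunc, if_pos (lt_of_le_of_lt (Nat.lt_succ_iff.mp (Finset.mem_range.mp hi)) hmN)]

/-- S3 -/
lemma coeff_mul_congr {a a' b b' : PowerSeries ℚ} {n : ℕ}
    (ha : ∀ m ≤ n, coeff m a = coeff m a') (hb : ∀ m ≤ n, coeff m b = coeff m b') :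
    coeff n (a * b) = coeff n (a' * b') := by
  rw [coeff_mul, coeff_mul]
  refine Finset.sum_congr rfl fun p hp => ?_
  have h := Finset.HasAntidiagonal.mem_antidiagonal.mp hp
  rw [ha p.1 (by omega), hb p.2 (by omega)]

lemma comp_add (f h g : PowerSeries ℚ) : PS.comp (f + h) g = PS.comp f g + PS.comp h g := by
  ext n
  simp only [coeff_comp, map_add, add_mul, Finset.sum_add_distrib]

lemma comp_one (g : PowerSeries ℚ) : PS.comp 1 g = 1 := by
  ext n
  rw [coeff_comp, Finset.sum_eq_single 0
    (fun i _ hi => by simp [coeff_one, hi])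
    (fun h => absurd (Finset.mem_range.mpr (Nat.succ_pos n)) h)]
  simp

lemma comp_X_left {g : PowerSeries ℚ} (hg : coeff 0 g = 0) : PS.comp X g = g := by
  ext n
  rw [coeff_comp]
  rcases Nat.eq_zero_or_pos n with rfl | hn
  · simpa using hg.symm
  · rw [Finset.sum_eq_single 1
      (fun i _ hi => by simp [coeff_X, hi])
      (fun h => absurd (Finset.mem_range.mpr (by omega)) h)]
    simp

lemma comp_X_right (f : PowerSeries ℚ) : PS.comp f X = f := by
  ext n
  rw [coeff_comp, Finset.sum_eq_single n
    (fun i _ hi => by simp [coeff_X_pow, Ne.symm hi])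
    (fun h => absurd (Finset.mem_range.mpr (by omega)) h)]
  simp [coeff_X_pow]

lemma comp_mul {g : PowerSeries ℚ} (hg : coeff 0 g = 0) (f h : PowerSeries ℚ) :
    PS.comp (f * h) g = PS.comp f g * PS.comp h g := by
  ext n
  rw [coeff_comp_eq_aeval_trunc hg _ (Nat.lt_succ_self n)]
  rw [coeff_mul_congr (fun m hm => coeff_comp_eq_aeval_trunc hg f (Nat.lt_succ_of_le hm))
      (fun m hm => coeff_comp_eq_aeval_trunc hg h (Nat.lt_succ_of_le hm))]
  rw [← map_mul]
  rw [coeff_aeval hg, coeff_aeval hg]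
  refine Finset.sum_congr rfl fun i hi => ?_
  have hi' : i ≤ n := Nat.lt_succ_iff.mp (Finset.mem_range.mp hi)
  congr 1
  rw [coeff_trunc, if_pos (by omega), PowerSeries.coeff_mul, Polynomial.coeff_mul]
  refine Finset.sum_congr rfl fun p hp => ?_
  have hpa := Finset.HasAntidiagonal.mem_antidiagonal.mp hp
  rw [coeff_trunc, coeff_trunc, if_pos (by omega), if_pos (by omega)]

lemma comp_pow {g : PowerSeries ℚ} (hg : coeff 0 g = 0) (f : PowerSeries ℚ) (k : ℕ) :
    PS.comp (f ^ k) g = (PS.comp f g) ^ k := by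
  induction k with
  | zero => simpa using comp_one g
  | succ k ih => rw [pow_succ, pow_succ, comp_mul hg, ih]

end PSAux

namespace PSAux

lemma comp_assoc {g h : PowerSeries ℚ} (hg : coeff 0 g = 0) (hh : coeff 0 h = 0)
    (f : PowerSeries ℚ) :
    PS.comp (PS.comp f g) h = PS.comp f (PS.comp g h) := by
  have hgh : coeff 0 (PS.comp g h) = 0 := by
    rw [coeff_comp]
    simp [hg]
  ext n
  rw [coeff_comp, coeff_comp]
  have step : ∀ k ∈ Finset.range (n+1),
      coeff k f * coeff n ((PS.comp g h) ^ k)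
        = ∑ j ∈ Finset.range (n+1), coeff k f * (coeff j (g ^ k) * coeff n (h ^ j)) := by
    intro k _
    rw [← comp_pow hh g k, coeff_comp, Finset.mul_sum]
  rw [Finset.sum_congr rfl step, Finset.sum_comm]
  refine Finset.sum_congr rfl fun j hj => ?_
  have hj' : j ≤ n := Nat.lt_succ_iff.mp (Finset.mem_range.mp hj)
  rw [coeff_comp, Finset.sum_mul]
  rw [Finset.sum_subset (Finset.range_subset_range.mpr (by omega : j + 1 ≤ n + 1))]
  · exact Finset.sum_congr rfl fun k _ => by ring
  · intro k _ hk
    have : j < k := by simp only [Finset.mem_range, not_lt] at hk; omega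
    rw [coeff_pow_lt hg this, mul_zero, zero_mul]

lemma coeff_pow_self {g : PowerSeries ℚ} (hg : coeff 0 g = 0) (n : ℕ) :
    coeff n (g ^ n) = (coeff 1 g) ^ n := by
  induction n with
  | zero => simp
  | succ n ih =>
    rw [pow_succ, PowerSeries.coeff_mul, Finset.sum_eq_single (n, 1)]
    · rw [ih, pow_succ]
    · rintro ⟨a, b⟩ hp hne
      have hab := Finset.HasAntidiagonal.mem_antidiagonal.mp hp
      rcases lt_or_ge a n with h | h
      · rw [coeff_pow_lt hg h, zero_mul]
      · have : b = 0 := by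
          rcases Nat.eq_or_lt_of_le h with h1 | h1
          · exact absurd (by simp [← h1, show b = 1 by omega]) hne
          · omega
        simp only at hab
        rw [this, hg, mul_zero]
    · intro h
      exact absurd (Finset.HasAntidiagonal.mem_antidiagonal.mpr (by omega)) h

lemma comp_inj {G : PowerSeries ℚ} (hG0 : coeff 0 G = 0) (hG1 : coeff 1 G = 1)
    {f f' : PowerSeries ℚ} (h : PS.comp f G = PS.comp f' G) : f = f' := by
  ext n
  induction n using Nat.strong_induction_on with
  | _ n ih =>
    have hc := congrArg (coeff n) h
    rw [coeff_comp, coeff_comp, Finset.sum_range_succ, Finset.sum_range_succ,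
      coeff_pow_self hG0, hG1, one_pow, mul_one, mul_one] at hc
    have : ∀ k ∈ Finset.range n, coeff k f * coeff n (G ^ k)
        = coeff k f' * coeff n (G ^ k) := fun k hk => by
      rw [ih k (Finset.mem_range.mp hk)]
    rw [Finset.sum_congr rfl this] at hc
    linarith

end PSAux

namespace PSAux

lemma poly_chain (g : PowerSeries ℚ) (p : Polynomial ℚ) :
    d⁄dX ℚ (Polynomial.aeval g p) =
      Polynomial.aeval g (Polynomial.derivative p) * d⁄dX ℚ g := by
  induction p using Polynomial.induction_on' with
  | add p q hp hq =>
    rw [map_add, map_add, hp, hq, map_add, map_add, add_mul]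
  | monomial n a =>
    rw [Polynomial.aeval_monomial, Polynomial.derivative_monomial, Polynomial.aeval_monomial]
    cases n with
    | zero => simp
    | succ n =>
      rw [Derivation.leibniz, Derivation.leibniz_pow]
      have hc : d⁄dX ℚ (algebraMap ℚ (PowerSeries ℚ) a) = 0 := by
        rw [PowerSeries.algebraMap_apply]; simp
      rw [hc, smul_zero, add_zero, smul_eq_mul, nsmul_eq_mul, smul_eq_mul,
        map_mul, map_natCast]
      push_cast
      ring

lemma comp_derivative {g : PowerSeries ℚ} (hg : coeff 0 g = 0) (f : PowerSeries ℚ) :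
    d⁄dX ℚ (PS.comp f g) = PS.comp (d⁄dX ℚ f) g * d⁄dX ℚ g := by
  ext n
  rw [PowerSeries.coeff_derivative, coeff_comp_eq_aeval_trunc hg f (by omega : n + 1 < n + 2),
    ← PowerSeries.coeff_derivative, poly_chain, ← trunc_derivative]
  exact (coeff_mul_congr (fun m hm => (coeff_comp_eq_aeval_trunc hg _ (Nat.lt_succ_of_le hm)).symm)
    (fun _ _ => rfl))

end PSAux

namespace PSAux

lemma hrec_range (b : ℕ → ℚ) (hb0 : b 0 = 0)
    (hrec : ∀ n, 2 ≤ n →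
      b n =
        (∑ p ∈ (Finset.HasAntidiagonal.antidiagonal (n + 1)).filter (fun p => 2 ≤ p.1 ∧ 2 ≤ p.2),
            (p.1 : ℚ) * b p.1 * b p.2)
        + ∑ p ∈ (Finset.HasAntidiagonal.antidiagonal n).filter (fun p => 1 ≤ p.1 ∧ 1 ≤ p.2),
            b p.1 * b p.2) (m : ℕ) :
    b (m + 2) = (∑ i ∈ Finset.range m, ((i : ℚ) + 2) * b (i + 2) * b (m + 1 - i))
      + ∑ i ∈ Finset.range (m + 3), b i * b (m + 2 - i) := by
  have h := hrec (m + 2) (by omega)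
  rw [Finset.sum_filter, Finset.sum_filter] at h
  rw [Finset.Nat.sum_antidiagonal_eq_sum_range_succ_mk,
    Finset.Nat.sum_antidiagonal_eq_sum_range_succ_mk] at h
  -- first sum : range (m+4)
  dsimp only at h
  rw [show (m + 2 + 1).succ = m + 3 + 1 from rfl, show (m + 2).succ = m + 3 from rfl] at h
  rw [Finset.sum_range_succ, Finset.sum_range_succ, Finset.sum_range_succ',
    Finset.sum_range_succ'] at h
  simp only [show ¬ (2 ≤ m + 3 - (m + 3)) from by omega, show ¬ (2 ≤ m + 3 - (m + 2)) from by omega,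
    show ¬ (2 ≤ (0:ℕ)) from by omega, show ¬ (2 ≤ (1:ℕ)) from by omega,
    and_false, false_and, if_false, add_zero, zero_add] at h
  have e1 : ∀ i ∈ Finset.range m,
      (if 2 ≤ i + 1 + 1 ∧ 2 ≤ m + 3 - (i + 1 + 1) then
        ((i + 1 + 1 : ℕ) : ℚ) * b (i + 1 + 1) * b (m + 3 - (i + 1 + 1)) else 0)
      = ((i : ℚ) + 2) * b (i + 2) * b (m + 1 - i) := by
    intro i hi
    have hi' : i < m := Finset.mem_range.mp hi
    rw [if_pos ⟨by omega, by omega⟩, show i + 1 + 1 = i + 2 from rfl,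
      show m + 3 - (i + 2) = m + 1 - i from by omega]
    push_cast; ring
  rw [Finset.sum_congr rfl e1] at h
  -- second sum : range (m+3)
  have e2 : ∀ i ∈ Finset.range (m + 3),
      (if 1 ≤ i ∧ 1 ≤ m + 2 - i then b i * b (m + 2 - i) else 0) = b i * b (m + 2 - i) := by
    intro i hi
    by_cases hc : 1 ≤ i ∧ 1 ≤ m + 2 - i
    · rw [if_pos hc]
    · rw [if_neg hc]
      rcases Decidable.not_and_iff_or_not.mp hc with h1 | h1
      · rw [show i = 0 by omega, hb0, zero_mul]
      · rw [show m + 2 - i = 0 by omega, hb0, mul_zero]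
  rw [Finset.sum_congr rfl e2] at h
  exact h

lemma key_sum (b : ℕ → ℚ) (hb0 : b 0 = 0) (hb1 : b 1 = -1) (m : ℕ)
    (hA : b (m + 2) = (∑ i ∈ Finset.range m, ((i : ℚ) + 2) * b (i + 2) * b (m + 1 - i))
      + ∑ i ∈ Finset.range (m + 3), b i * b (m + 2 - i)) :
    ∑ i ∈ Finset.range (m + 3),
        ((if i = 1 then (1:ℚ) else 0) + b i) * (-(b (m + 2 - i + 1)) * (((m + 2 - i : ℕ) : ℚ) + 1))
      = ∑ i ∈ Finset.range (m + 3), (-(b i)) * (-(b (m + 2 - i))) := by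
  have hRHS : ∀ i ∈ Finset.range (m + 3),
      (-(b i)) * (-(b (m + 2 - i))) = b i * b (m + 2 - i) := fun i _ => by ring
  rw [Finset.sum_congr rfl hRHS]
  simp_rw [add_mul, ite_mul, one_mul, zero_mul]
  rw [Finset.sum_add_distrib, Finset.sum_ite_eq' (Finset.range (m + 3)) 1,
    if_pos (Finset.mem_range.mpr (by omega))]
  -- second part: peel and reindex
  rw [Finset.sum_range_succ', Finset.sum_range_succ']
  have e0 : b 0 * (-(b (m + 2 - 0 + 1)) * (((m + 2 - 0 : ℕ) : ℚ) + 1)) = 0 := by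
    rw [hb0]; ring
  have e1 : b (0 + 1) * (-(b (m + 2 - (0 + 1) + 1)) * (((m + 2 - (0 + 1) : ℕ) : ℚ) + 1))
      = b (m + 2) * (((m + 1 : ℕ) : ℚ) + 1) := by
    rw [hb1, show m + 2 - (0 + 1) + 1 = m + 2 from by omega,
      show m + 2 - (0 + 1) = m + 1 from by omega]
    ring
  rw [e0, e1, add_zero]
  have e2 : ∀ i ∈ Finset.range (m + 1),
      b (i + 1 + 1) * (-(b (m + 2 - (i + 1 + 1) + 1)) * (((m + 2 - (i + 1 + 1) : ℕ) : ℚ) + 1))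
      = -(((m + 1 - i : ℕ) : ℚ) * b (m + 1 - i) * b (i + 2)) := by
    intro i hi
    have hi' : i < m + 1 := Finset.mem_range.mp hi
    rw [show i + 1 + 1 = i + 2 from rfl, show m + 2 - (i + 2) + 1 = m + 1 - i from by omega,
      show m + 2 - (i + 2) = m - i from by omega,
      show ((m + 1 - i : ℕ) : ℚ) = ((m - i : ℕ) : ℚ) + 1 from by
        rw [show m + 1 - i = (m - i) + 1 from by omega]; push_cast; ring]
    ring
  rw [Finset.sum_congr rfl e2, Finset.sum_range_succ]
  rw [show m + 1 - m = 1 from by omega, hb1]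
  -- reflection
  have hrefl : ∑ i ∈ Finset.range m, -(((m + 1 - i : ℕ) : ℚ) * b (m + 1 - i) * b (i + 2))
      = -(∑ i ∈ Finset.range m, ((i : ℚ) + 2) * b (i + 2) * b (m + 1 - i)) := by
    rw [← Finset.sum_neg_distrib, ← Finset.sum_range_reflect]
    refine Finset.sum_congr rfl fun i hi => ?_
    have hi' : i < m := Finset.mem_range.mp hi
    have h1 : m + 1 - (m - 1 - i) = i + 2 := by omega
    have h2 : m - 1 - i + 2 = m + 1 - i := by omega
    rw [h1, h2]; push_cast; ring
  rw [hrefl]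
  push_cast
  linear_combination hA

end PSAux


namespace PSAux

lemma G_ode (b : ℕ → ℚ) (hb0 : b 0 = 0) (hb1 : b 1 = -1)
    (hrec : ∀ n, 2 ≤ n →
      b n =
        (∑ p ∈ (Finset.HasAntidiagonal.antidiagonal (n + 1)).filter (fun p => 2 ≤ p.1 ∧ 2 ≤ p.2),
            (p.1 : ℚ) * b p.1 * b p.2)
        + ∑ p ∈ (Finset.HasAntidiagonal.antidiagonal n).filter (fun p => 1 ≤ p.1 ∧ 1 ≤ p.2),
            b p.1 * b p.2) :
    (X - PowerSeries.mk fun n => -(b n)) * d⁄dX ℚ (PowerSeries.mk fun n => -(b n))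
      = (PowerSeries.mk fun n => -(b n)) ^ 2 := by
  ext n
  rw [pow_two, PowerSeries.coeff_mul, PowerSeries.coeff_mul,
    Finset.Nat.sum_antidiagonal_eq_sum_range_succ_mk,
    Finset.Nat.sum_antidiagonal_eq_sum_range_succ_mk]
  dsimp only
  simp only [map_sub, PowerSeries.coeff_X, PowerSeries.coeff_mk, PowerSeries.coeff_derivative]
  match n with
  | 0 => simp [hb0]
  | 1 => norm_num [Finset.sum_range_succ, hb0, hb1]
  | (m+2) =>
    have hk := key_sum b hb0 hb1 m (hrec_range b hb0 hrec m)
    rw [show (m+2).succ = m + 3 from rfl]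
    rw [← hk]
    refine Finset.sum_congr rfl fun i hi => ?_
    rw [sub_neg_eq_add]

lemma ode_unique {F u v : PowerSeries ℚ} (hF0 : coeff 0 F = 0) (hF1 : coeff 1 F = 1)
    (hu : F ^ 2 * d⁄dX ℚ u = (u - F) * d⁄dX ℚ F)
    (hv : F ^ 2 * d⁄dX ℚ v = (v - F) * d⁄dX ℚ F) : u = v := by
  have hw : ∀ n, coeff n (u - v) = 0 := by
    intro n
    induction n using Nat.strong_induction_on with
    | _ n ih =>
      have heq : F ^ 2 * d⁄dX ℚ (u - v) = (u - v) * d⁄dX ℚ F := by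
        rw [map_sub, mul_sub, hu, hv]; ring
      have hc := congrArg (coeff n) heq
      rw [PowerSeries.coeff_mul, PowerSeries.coeff_mul] at hc
      rw [Finset.sum_eq_zero (fun p hp => ?_)] at hc
      · rw [Finset.sum_eq_single (n, 0) (fun p hp hne => ?_) (fun h => ?_)] at hc
        · rw [PowerSeries.coeff_derivative, hF1] at hc
          simp only [Nat.cast_zero, zero_add, one_mul, mul_one] at hc
          exact hc.symm
        · have hab := Finset.HasAntidiagonal.mem_antidiagonal.mp hp
          have h1 : p.1 < n := by
            rcases Nat.lt_or_ge p.1 n with h | h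
            · exact h
            · exact absurd (Prod.ext (by omega) (by omega)) hne
          rw [ih p.1 h1, zero_mul]
        · exact absurd (Finset.HasAntidiagonal.mem_antidiagonal.mpr (by omega)) h
      · have hab := Finset.HasAntidiagonal.mem_antidiagonal.mp hp
        rcases Nat.lt_or_ge p.1 2 with h | h
        · rw [coeff_pow_lt hF0 h, zero_mul]
        · have h2 : p.2 + 1 < n := by omega
          rw [PowerSeries.coeff_derivative, ih (p.2 + 1) h2, zero_mul, mul_zero]
  ext n
  have := hw n
  rw [map_sub] at this
  linarith

lemma H_ode : HSeries = X + X ^ 2 * d⁄dX ℚ HSeries := by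
  ext n
  rw [map_add, PowerSeries.coeff_X, mul_comm (X ^ 2 : PowerSeries ℚ),
    PowerSeries.coeff_mul_X_pow']
  match n with
  | 0 => simp [HSeries]
  | 1 => simp [HSeries]
  | (m+2) =>
    rw [if_neg (by omega), if_pos (by omega), zero_add,
      show m + 2 - 2 = m from rfl, PowerSeries.coeff_derivative]
    simp only [HSeries, PowerSeries.coeff_mk]
    rw [if_neg (by omega), if_neg (by omega)]
    rw [show m + 2 - 1 = m + 1 from rfl, show m + 1 - 1 = m from rfl,
      Nat.factorial_succ]
    push_cast
    ring

end PSAux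


open PSAux in
theorem inverse_of_factorial_series (b : ℕ → ℚ)
    (hb0 : b 0 = 0) (hb1 : b 1 = -1)
    (hrec : ∀ n, 2 ≤ n →
      b n =
        (∑ p ∈ (Finset.HasAntidiagonal.antidiagonal (n + 1)).filter (fun p => 2 ≤ p.1 ∧ 2 ≤ p.2),
            (p.1 : ℚ) * b p.1 * b p.2)
        + ∑ p ∈ (Finset.HasAntidiagonal.antidiagonal n).filter (fun p => 1 ≤ p.1 ∧ 1 ≤ p.2),
            b p.1 * b p.2)
    (G : PowerSeries ℚ) (hG : G = PowerSeries.mk fun n => -(b n)) :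
    PS.comp G HSeries = PowerSeries.X ∧ PS.comp HSeries G = PowerSeries.X := by
  have hG0 : coeff 0 G = 0 := by simp [hG, hb0]
  have hG1 : coeff 1 G = 1 := by simp [hG, hb1]
  have hH0 : coeff 0 HSeries = 0 := by simp [HSeries]
  have hode : (X - G) * d⁄dX ℚ G = G ^ 2 := by
    rw [hG]; exact G_ode b hb0 hb1 hrec
  have hu_eq : PS.comp HSeries G = G + G ^ 2 * PS.comp (d⁄dX ℚ HSeries) G := by
    conv_lhs => rw [H_ode]
    rw [comp_add, comp_mul hG0, comp_pow hG0, comp_X_left hG0]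
  have hdu : d⁄dX ℚ (PS.comp HSeries G) = PS.comp (d⁄dX ℚ HSeries) G * d⁄dX ℚ G :=
    comp_derivative hG0 HSeries
  have key1 : G ^ 2 * d⁄dX ℚ (PS.comp HSeries G) = (PS.comp HSeries G - G) * d⁄dX ℚ G := by
    rw [hdu, hu_eq]; ring
  have key2 : G ^ 2 * d⁄dX ℚ (X : PowerSeries ℚ) = ((X : PowerSeries ℚ) - G) * d⁄dX ℚ G := by
    rw [PowerSeries.derivative_X, mul_one, hode]
  have hu : PS.comp HSeries G = X := ode_unique hG0 hG1 key1 key2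
  refine ⟨?_, hu⟩
  apply comp_inj hG0 hG1
  rw [comp_assoc hH0 hG0 G, hu, comp_X_right, comp_X_left hG0]
end

section
/- Let u(x) = x - \sum_{i\ge 2} u_i x^i be a formal power series over a commutative \mathbb{Q}-algebra, and let v(x) = x + \sum_{i\ge 2} v_i x^i be its compositional inverse. Then for all n \ge 2, v_n = \sum_{\lambda \vdash n-1} P(\lambda) \prod_{i\ge 1} u_{i+1}^{\lambda_i}, where for a partition \lambda of n-1 with \lambda_i parts equal to i, P(\lambda) = (n - 1 + \sum_i \lambda_i)! / (n! \prod_i \lambda_i!). -/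
open PowerSeries Finset

/-- `P(λ) = (n-1+∑ᵢ λᵢ)! / (n! ∏ᵢ λᵢ!)` for `λ ⊢ n-1`, where `λᵢ` is the
multiplicity of `i` in `λ`. -/
noncomputable def Pcoeff (n : ℕ) (lam : Nat.Partition (n - 1)) : ℚ :=
  ((n - 1 + lam.parts.card).factorial : ℚ) /
    ((n.factorial : ℚ) * ∏ i ∈ Finset.Icc 1 (n - 1), ((lam.parts.count i).factorial : ℚ))

set_option linter.unusedSectionVars false

namespace LIPaux

/-- multisets of positive naturals summing to `N` -/
noncomputable def PF (N : ℕ) : Finset (Multiset ℕ) :=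
  Finset.univ.image (Nat.Partition.parts (n := N))

lemma mem_PF {N : ℕ} {s : Multiset ℕ} :
    s ∈ PF N ↔ (∀ i ∈ s, 0 < i) ∧ s.sum = N := by
  constructor
  · rintro hs
    rcases Finset.mem_image.1 hs with ⟨p, -, rfl⟩
    exact ⟨fun i hi => p.parts_pos hi, p.parts_sum⟩
  · rintro ⟨h1, h2⟩
    exact Finset.mem_image.2 ⟨⟨s, fun {i} hi => h1 i hi, h2⟩, Finset.mem_univ _, rfl⟩

lemma PF_zero : PF 0 = {0} := by
  ext s
  simp only [mem_PF, Finset.mem_singleton]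
  constructor
  · rintro ⟨h1, h2⟩
    rw [Multiset.sum_eq_zero_iff] at h2
    rw [Multiset.eq_zero_iff_forall_notMem]
    intro a ha
    exact (h1 a ha).ne' (h2 a ha)
  · rintro rfl
    simp

lemma le_of_mem_PF {N : ℕ} {s : Multiset ℕ} {i : ℕ} (hs : s ∈ PF N) (hi : i ∈ s) : i ≤ N :=
  (mem_PF.1 hs).2 ▸ Multiset.single_le_sum (fun x _ => Nat.zero_le x) i hi

lemma card_le_of_mem_PF {N : ℕ} {s : Multiset ℕ} (hs : s ∈ PF N) : Multiset.card s ≤ N := by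
  have h := Multiset.card_nsmul_le_sum (s := s) (a := 1)
    (fun x hx => (mem_PF.1 hs).1 x hx)
  simpa [(mem_PF.1 hs).2] using h

/-- product of factorials of multiplicities -/
noncomputable def fprod (W : ℕ) (s : Multiset ℕ) : ℚ :=
  ∏ i ∈ Finset.Icc 1 W, ((s.count i).factorial : ℚ)

lemma fprod_pos (W : ℕ) (s : Multiset ℕ) : 0 < fprod W s :=
  Finset.prod_pos fun i _ => by positivity

lemma sum_PF_cons {M : Type*} [AddCommMonoid M] (F : ℕ → Multiset ℕ → M) (N : ℕ) :
    ∑ a ∈ Finset.Icc 1 N, ∑ s ∈ PF (N - a), F a s =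
      ∑ t ∈ PF N, ∑ a ∈ t.toFinset, F a (t.erase a) := by
  rw [Finset.sum_sigma' (Finset.Icc 1 N) (fun a => PF (N - a)) (fun a s => F a s),
    Finset.sum_sigma' (PF N) (fun t => t.toFinset) (fun t a => F a (t.erase a))]
  refine Finset.sum_nbij' (fun p => ⟨p.1 ::ₘ p.2, p.1⟩) (fun q => ⟨q.2, q.1.erase q.2⟩)
    ?_ ?_ ?_ ?_ ?_
  · rintro ⟨a, s⟩ hp
    dsimp only at hp ⊢
    rw [Finset.mem_sigma] at hp
    obtain ⟨ha, hs⟩ := hp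
    rw [Finset.mem_Icc] at ha
    rw [mem_PF] at hs
    have hs1 : ∀ i ∈ s, 0 < i := hs.1
    have hs2 : s.sum = N - a := hs.2
    have ha1 : 1 ≤ a := ha.1
    have ha2 : a ≤ N := ha.2
    rw [Finset.mem_sigma]
    constructor
    · rw [mem_PF]
      constructor
      · intro i hi
        rcases Multiset.mem_cons.1 hi with rfl | hi
        · exact ha1
        · exact hs1 i hi
      · rw [Multiset.sum_cons, hs2]; omega
    · simp
  · rintro ⟨t, a⟩ hq
    dsimp only at hq ⊢
    rw [Finset.mem_sigma] at hq
    obtain ⟨ht, ha⟩ := hq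
    rw [Multiset.mem_toFinset] at ha
    rw [mem_PF] at ht
    have ha1 : 1 ≤ a := ht.1 a ha
    have haN : a ≤ N := by
      rw [← ht.2]
      exact Multiset.single_le_sum (fun x _ => Nat.zero_le x) a ha
    rw [Finset.mem_sigma]
    constructor
    · rw [Finset.mem_Icc]; exact ⟨ha1, haN⟩
    · rw [mem_PF]
      constructor
      · intro i hi
        exact ht.1 i (Multiset.mem_of_le (Multiset.erase_le a t) hi)
      · have hce := Multiset.cons_erase ha
        have h3 : a + (t.erase a).sum = N := by
          rw [← Multiset.sum_cons, hce, ht.2]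
        show (t.erase a).sum = N - a
        omega
  · rintro ⟨a, s⟩ hp
    show (⟨a, (a ::ₘ s).erase a⟩ : Σ _ : ℕ, Multiset ℕ) = ⟨a, s⟩
    rw [Multiset.erase_cons_head]
  · rintro ⟨t, a⟩ hq
    rw [Finset.mem_sigma] at hq
    have ha : a ∈ t := Multiset.mem_toFinset.1 hq.2
    show (⟨a ::ₘ t.erase a, a⟩ : Σ _ : Multiset ℕ, ℕ) = ⟨t, a⟩
    rw [Multiset.cons_erase ha]
  · rintro ⟨a, s⟩ hp
    show F a s = F a ((a ::ₘ s).erase a)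
    rw [Multiset.erase_cons_head]


variable {R : Type*} [CommRing R] [Algebra ℚ R]

lemma inner_sum_erase (c : ℕ → R) (W m N : ℕ) (hNW : N ≤ W) {t : Multiset ℕ}
    (ht : t ∈ PF N) :
    ∑ a ∈ t.toFinset,
      (if Multiset.card (t.erase a) = m then ((m.factorial : ℚ) / fprod W (t.erase a)) else 0) •
        (c a * ∏ i ∈ Finset.Icc 1 W, (c i) ^ ((t.erase a).count i)) =
    (if Multiset.card t = m + 1 then (((m+1).factorial : ℚ) / fprod W t) else 0) •
      ∏ i ∈ Finset.Icc 1 W, (c i) ^ (t.count i) := by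
  by_cases hcard : Multiset.card t = m + 1
  · rw [if_pos hcard]
    have step : ∀ a ∈ t.toFinset,
        (if Multiset.card (t.erase a) = m then ((m.factorial : ℚ) / fprod W (t.erase a)) else 0) •
          (c a * ∏ i ∈ Finset.Icc 1 W, (c i) ^ ((t.erase a).count i))
        = ((m.factorial : ℚ) * (t.count a : ℚ) / fprod W t) •
            ∏ i ∈ Finset.Icc 1 W, (c i) ^ (t.count i) := by
      intro a ha
      have hat : a ∈ t := Multiset.mem_toFinset.1 ha
      have hcntpos : 0 < t.count a := Multiset.count_pos.2 hat
      have hcount : t.count a = (t.erase a).count a + 1 := by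
        rw [Multiset.count_erase_self]; omega
      have haW : a ∈ Finset.Icc 1 W := by
        rw [Finset.mem_Icc]
        exact ⟨(mem_PF.1 ht).1 a hat, le_trans (le_of_mem_PF ht hat) hNW⟩
      have hcounts : ∀ i, i ≠ a → (t.erase a).count i = t.count i := fun i hi =>
        Multiset.count_erase_of_ne hi t
      have hce : Multiset.card (t.erase a) = m := by
        rw [Multiset.card_erase_of_mem hat, hcard]; rfl
      rw [if_pos hce]
      have hrest : ∏ i ∈ (Finset.Icc 1 W).erase a, (c i) ^ ((t.erase a).count i)
          = ∏ i ∈ (Finset.Icc 1 W).erase a, (c i) ^ (t.count i) :=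
        Finset.prod_congr rfl fun i hi => by rw [hcounts i (Finset.ne_of_mem_erase hi)]
      have hrest2 : ∏ i ∈ (Finset.Icc 1 W).erase a, (((t.erase a).count i).factorial : ℚ)
          = ∏ i ∈ (Finset.Icc 1 W).erase a, ((t.count i).factorial : ℚ) :=
        Finset.prod_congr rfl fun i hi => by rw [hcounts i (Finset.ne_of_mem_erase hi)]
      have hprod : c a * ∏ i ∈ Finset.Icc 1 W, (c i) ^ ((t.erase a).count i)
          = ∏ i ∈ Finset.Icc 1 W, (c i) ^ (t.count i) := by
        rw [← Finset.mul_prod_erase _ (fun i => (c i) ^ ((t.erase a).count i)) haW,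
          ← Finset.mul_prod_erase _ (fun i => (c i) ^ (t.count i)) haW, hrest, hcount,
          pow_succ]
        ring
      have hfac : fprod W t = (t.count a : ℚ) * fprod W (t.erase a) := by
        unfold fprod
        rw [← Finset.mul_prod_erase _ (fun i => (((t.erase a).count i).factorial : ℚ)) haW,
          ← Finset.mul_prod_erase _ (fun i => ((t.count i).factorial : ℚ)) haW, hrest2,
          hcount]
        push_cast [Nat.factorial_succ]
        ring
      rw [hprod, hfac]
      congr 1
      have hfp : fprod W (t.erase a) ≠ 0 := (fprod_pos _ _).ne'
      have hcq : (t.count a : ℚ) ≠ 0 := by exact_mod_cast hcntpos.ne'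
      field_simp
    rw [Finset.sum_congr rfl step, ← Finset.sum_smul, ← Finset.sum_div, ← Finset.mul_sum]
    congr 2
    have hsum : ∑ a ∈ t.toFinset, (t.count a : ℚ) = (Multiset.card t : ℚ) := by
      rw [← Nat.cast_sum]
      exact_mod_cast congrArg (fun k : ℕ => (k : ℚ)) (Multiset.toFinset_sum_count_eq t)
    rw [hsum, hcard]
    push_cast [Nat.factorial_succ]
    ring
  · rw [if_neg hcard, zero_smul]
    refine Finset.sum_eq_zero fun a ha => ?_
    have hat : a ∈ t := Multiset.mem_toFinset.1 ha
    have hcpos : 0 < Multiset.card t := Multiset.card_pos_iff_exists_mem.2 ⟨a, hat⟩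
    have hne : Multiset.card (t.erase a) ≠ m := by
      have h2 : Multiset.card (t.erase a) = Multiset.card t - 1 :=
        Multiset.card_erase_of_mem hat
      omega
    rw [if_neg hne, zero_smul]

lemma coeff_pow_eq_sum_PF (Cs : PowerSeries R) (hC : constantCoeff Cs = 0) (W : ℕ) :
    ∀ m N, N ≤ W →
      coeff N (Cs ^ m) =
        ∑ s ∈ PF N,
          (if Multiset.card s = m then ((m.factorial : ℚ) / fprod W s) else 0) •
            ∏ i ∈ Finset.Icc 1 W, (coeff i Cs) ^ (s.count i) := by
  intro m
  induction m with
  | zero =>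
    intro N hNW
    rcases Nat.eq_zero_or_pos N with rfl | hN
    · rw [PF_zero, pow_zero, Finset.sum_singleton]
      simp [fprod]
    · rw [pow_zero, coeff_one, if_neg hN.ne']
      refine (Finset.sum_eq_zero fun s hs => ?_).symm
      have h1 : Multiset.card s ≠ 0 := by
        intro h
        rw [Multiset.card_eq_zero] at h
        have hsum := (mem_PF.1 hs).2
        rw [h] at hsum
        simp at hsum
        omega
      rw [if_neg h1, zero_smul]
  | succ m ih =>
    intro N hNW
    rw [pow_succ', coeff_mul, Finset.Nat.sum_antidiagonal_eq_sum_range_succ_mk]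
    have hins : Finset.range (N+1) = insert 0 (Finset.Icc 1 N) := by
      ext x; simp only [Finset.mem_range, Finset.mem_Icc, Finset.mem_insert]; omega
    rw [hins, Finset.sum_insert (by simp)]
    have h0 : (coeff 0) Cs = 0 := by
      rw [coeff_zero_eq_constantCoeff]; exact hC
    rw [h0, zero_mul, zero_add]
    have hstep : ∀ a ∈ Finset.Icc 1 N,
        coeff a Cs * coeff (N - a) (Cs ^ m) =
        ∑ s ∈ PF (N - a),
          (if Multiset.card s = m then ((m.factorial : ℚ) / fprod W s) else 0) •
            (coeff a Cs * ∏ i ∈ Finset.Icc 1 W, (coeff i Cs) ^ (s.count i)) := by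
      intro a ha
      rw [ih (N - a) (le_trans (Nat.sub_le _ _) hNW), Finset.mul_sum]
      exact Finset.sum_congr rfl fun s hs => mul_smul_comm _ _ _
    rw [Finset.sum_congr rfl hstep]
    rw [sum_PF_cons (fun a s =>
      (if Multiset.card s = m then ((m.factorial : ℚ) / fprod W s) else 0) •
        (coeff a Cs * ∏ i ∈ Finset.Icc 1 W, (coeff i Cs) ^ (s.count i))) N]
    exact Finset.sum_congr rfl fun t ht => inner_sum_erase _ W m N hNW ht


lemma coeff_mul_pow_eq_zero {Cs : PowerSeries R} (hC : constantCoeff Cs = 0)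
    (f : PowerSeries R) {d k : ℕ} (hdk : d < k) :
    coeff d (f * Cs ^ k) = 0 := by
  obtain ⟨q, hq⟩ := pow_dvd_pow_of_dvd (PowerSeries.X_dvd_iff.2 hC) k
  rw [hq, show f * (X ^ k * q) = X ^ k * (f * q) by ring, PowerSeries.coeff_X_pow_mul',
    if_neg (by omega)]

lemma coeff_pow_eq_zero {Cs : PowerSeries R} (hC : constantCoeff Cs = 0)
    {d k : ℕ} (hdk : d < k) :
    coeff d (Cs ^ k) = 0 := by
  rw [← one_mul (Cs ^ k)]
  exact coeff_mul_pow_eq_zero hC 1 hdk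

lemma regroup (d : ℕ) (f g : ℕ → R) (hg : ∀ M, d < M → g M = 0) :
    ∑ m ∈ Finset.range (d+1), ∑ n ∈ Finset.range (d+1), f m * g (m + n) =
      ∑ M ∈ Finset.range (d+1), (∑ m ∈ Finset.range (M+1), f m) * g M := by
  have h1 : ∀ m ∈ Finset.range (d+1),
      ∑ n ∈ Finset.range (d+1), f m * g (m + n) =
        ∑ M ∈ Finset.Ico m (d+1), f m * g M := by
    intro m hm
    rw [Finset.mem_range] at hm
    rw [Finset.sum_Ico_eq_sum_range]
    refine (Finset.sum_subset ?_ ?_).symm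
    · intro x hx
      rw [Finset.mem_range] at hx ⊢
      omega
    · intro x hx hx'
      rw [Finset.mem_range] at hx hx'
      rw [hg (m+x) (by omega), mul_zero]
  rw [Finset.sum_congr rfl h1, Finset.range_eq_Ico, Finset.sum_Ico_Ico_comm]
  refine Finset.sum_congr rfl fun M hM => ?_
  rw [Finset.sum_mul, Finset.range_eq_Ico]

lemma choose_sum (k M : ℕ) :
    ∑ m ∈ Finset.range (M+1), (k+m).choose m = (k+1+M).choose M := by
  calc ∑ m ∈ Finset.range (M+1), (k+m).choose m
      = ∑ m ∈ Finset.range (M+1), (k+m).choose k :=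
        Finset.sum_congr rfl fun m hm => Nat.choose_symm_add.symm
    _ = ∑ j ∈ Finset.Ico k (k+(M+1)), j.choose k := by
        rw [Finset.sum_Ico_eq_sum_range, show k + (M+1) - k = M + 1 by omega]
    _ = ∑ j ∈ Finset.Icc k (k+M), j.choose k := by
        rw [show k + (M+1) = (k+M) + 1 by omega, Finset.Ico_add_one_right_eq_Icc]
    _ = (k+M+1).choose (k+1) := Nat.sum_Icc_choose _ _
    _ = (k+1+M).choose M := by
        rw [show k+M+1 = (k+1)+M by omega]
        exact Nat.choose_symm_add

lemma key1_base (g : PowerSeries R) (hg : constantCoeff g = 1) (d : ℕ) :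
    coeff d (PowerSeries.invOfUnit g 1) =
      ∑ m ∈ Finset.range (d+1), coeff d ((1 - g) ^ m) := by
  have hgu : g * PowerSeries.invOfUnit g 1 = 1 :=
    PowerSeries.mul_invOfUnit g 1 (by simpa using hg)
  have hC : constantCoeff (1 - g) = 0 := by simp [hg]
  set h := PowerSeries.invOfUnit g 1 with hh
  set S := ∑ i ∈ Finset.range (d+1), (1-g)^i with hS
  have h3 := geom_sum_mul (1-g) (d+1)
  have h2 : S * g = 1 - (1-g)^(d+1) := by linear_combination (-1 : R⟦X⟧) * h3
  have key : h = S + h * (1-g)^(d+1) := by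
    calc h = h * 1 := (mul_one h).symm
      _ = h * (S * g + (1-g)^(d+1)) := by rw [h2]; ring
      _ = S * (g * h) + h * (1-g)^(d+1) := by ring
      _ = S + h * (1-g)^(d+1) := by rw [hgu, mul_one]
  rw [key, map_add, coeff_mul_pow_eq_zero hC h (by omega), add_zero, hS, map_sum]

lemma key1 (g : PowerSeries R) (hg : constantCoeff g = 1) :
    ∀ k d, coeff d ((PowerSeries.invOfUnit g 1) ^ (k+1)) =
      ∑ m ∈ Finset.range (d+1), (((k+m).choose m : ℕ) : R) * coeff d ((1 - g) ^ m) := by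
  have hC : constantCoeff (1 - g) = 0 := by simp [hg]
  intro k
  induction k with
  | zero =>
    intro d
    rw [pow_one, key1_base g hg d]
    refine Finset.sum_congr rfl fun m hm => ?_
    rw [zero_add, Nat.choose_self, Nat.cast_one, one_mul]
  | succ k ih =>
    intro d
    rw [show k+1+1 = (k+1) + 1 by rfl, pow_succ, coeff_mul,
      Finset.Nat.sum_antidiagonal_eq_sum_range_succ_mk]
    have hA : ∀ a, a ≤ d → coeff a ((PowerSeries.invOfUnit g 1)^(k+1)) =
        ∑ m ∈ Finset.range (d+1), (((k+m).choose m : ℕ) : R) * coeff a ((1-g)^m) := by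
      intro a ha
      rw [ih a]
      refine Finset.sum_subset ?_ ?_
      · intro x hx
        rw [Finset.mem_range] at hx ⊢
        omega
      · intro x hx hx'
        rw [Finset.mem_range] at hx hx'
        rw [coeff_pow_eq_zero hC (by omega), mul_zero]
    have hB : ∀ b, b ≤ d → coeff b (PowerSeries.invOfUnit g 1) =
        ∑ m ∈ Finset.range (d+1), coeff b ((1-g)^m) := by
      intro b hb
      rw [key1_base g hg b]
      refine Finset.sum_subset ?_ ?_
      · intro x hx
        rw [Finset.mem_range] at hx ⊢
        omega
      · intro x hx hx'
        rw [Finset.mem_range] at hx hx'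
        exact coeff_pow_eq_zero hC (by omega)
    have hmain : ∀ a ∈ Finset.range (d+1),
        coeff a ((PowerSeries.invOfUnit g 1)^(k+1)) *
          coeff (d - a) (PowerSeries.invOfUnit g 1) =
        ∑ m ∈ Finset.range (d+1), ∑ n ∈ Finset.range (d+1),
          (((k+m).choose m : ℕ) : R) * (coeff a ((1-g)^m) * coeff (d-a) ((1-g)^n)) := by
      intro a ha
      rw [Finset.mem_range] at ha
      rw [hA a (by omega), hB (d-a) (by omega), Finset.sum_mul_sum]
      refine Finset.sum_congr rfl fun m hm => Finset.sum_congr rfl fun n hn => by ring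
    rw [Finset.sum_congr rfl hmain]
    rw [Finset.sum_comm]
    have hsw : ∀ m ∈ Finset.range (d+1),
        ∑ a ∈ Finset.range (d+1), ∑ n ∈ Finset.range (d+1),
          (((k+m).choose m : ℕ) : R) * (coeff a ((1-g)^m) * coeff (d-a) ((1-g)^n)) =
        ∑ n ∈ Finset.range (d+1),
          (((k+m).choose m : ℕ) : R) * coeff d ((1-g)^(m+n)) := by
      intro m hm
      rw [Finset.sum_comm]
      refine Finset.sum_congr rfl fun n hn => ?_
      rw [← Finset.mul_sum]
      congr 1
      rw [pow_add, coeff_mul, Finset.Nat.sum_antidiagonal_eq_sum_range_succ_mk]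
    rw [Finset.sum_congr rfl hsw]
    rw [regroup d (fun m => (((k+m).choose m : ℕ) : R)) (fun M => coeff d ((1-g)^M))
      (fun M hM => coeff_pow_eq_zero hC hM)]
    refine Finset.sum_congr rfl fun M hM => ?_
    congr 1
    rw [← Nat.cast_sum, choose_sum]


lemma nsmul_cancel {x : R} {j : ℕ} (hj : j ≠ 0) (h : j • x = 0) : x = 0 := by
  have h2 : ((j : ℚ)) • x = 0 := by rw [Nat.cast_smul_eq_nsmul]; exact h
  calc x = ((j : ℚ)⁻¹ * (j : ℚ)) • x := by
        rw [inv_mul_cancel₀ (by exact_mod_cast hj), one_smul]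
    _ = (j:ℚ)⁻¹ • ((j:ℚ) • x) := by rw [mul_smul]
    _ = 0 := by rw [h2, smul_zero]

lemma residue (g : PowerSeries R) (hg : constantCoeff g = 1) {j : ℕ} (hj : 1 ≤ j) :
    coeff j ((PowerSeries.invOfUnit g 1)^(j+1) * d⁄dX R (X * g)) = 0 := by
  obtain ⟨i, rfl⟩ : ∃ i, j = i + 1 := ⟨j - 1, by omega⟩
  set h := PowerSeries.invOfUnit g 1 with hh
  have hgh : g * h = 1 := PowerSeries.mul_invOfUnit g 1 (by simpa using hg)
  have hdu : d⁄dX R (X * g) = X * (d⁄dX R g) + g := by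
    rw [Derivation.leibniz, PowerSeries.derivative_X, smul_eq_mul, smul_eq_mul, mul_one]
  have hgd : g * d⁄dX R h = -(h * d⁄dX R g) := by
    have h0 : (d⁄dX R) (g * h) = 0 := by rw [hgh]; exact Derivation.map_one_eq_zero _
    rw [Derivation.leibniz, smul_eq_mul, smul_eq_mul] at h0
    linear_combination h0
  have hh' : d⁄dX R h = -(h^2 * d⁄dX R g) := by
    calc d⁄dX R h = (g * h) * d⁄dX R h := by rw [hgh, one_mul]
      _ = h * (g * d⁄dX R h) := by ring
      _ = h * (-(h * d⁄dX R g)) := by rw [hgd]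
      _ = -(h^2 * d⁄dX R g) := by ring
  have hpow : d⁄dX R (h^(i+1)) = -((i+1 : ℕ) • (h^(i+2) * d⁄dX R g)) := by
    rw [Derivation.leibniz_pow, smul_eq_mul]
    rw [Nat.succ_sub_one, hh']
    rw [show h ^ i * -(h ^ 2 * d⁄dX R g) = -(h^(i+2) * d⁄dX R g) by ring]
    rw [smul_neg]
  have hsplit : h^(i+1+1) * d⁄dX R (X*g) = h^(i+1) + X * (h^(i+2) * d⁄dX R g) := by
    rw [hdu]
    calc h^(i+2) * (X * d⁄dX R g + g)
        = (g*h) * h^(i+1) + X * (h^(i+2) * d⁄dX R g) := by ring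
      _ = h^(i+1) + X*(h^(i+2) * d⁄dX R g) := by rw [hgh, one_mul]
  rw [hsplit, map_add]
  have e1 : coeff (i+1) (X * (h^(i+2) * d⁄dX R g)) = coeff i (h^(i+2) * d⁄dX R g) :=
    PowerSeries.coeff_succ_X_mul i _
  have e2 : coeff i ((d⁄dX R) (h^(i+1))) = coeff (i+1) (h^(i+1)) * (i+1) :=
    PowerSeries.coeff_derivative _ i
  rw [hpow, map_neg] at e2
  rw [map_nsmul] at e2
  -- e2 : -((i+1) • coeff i (h^(i+2) * Dg)) = coeff (i+1) (h^(i+1)) * (i+1)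
  apply nsmul_cancel (x := coeff (i+1) (h ^ (i + 1)) + coeff (i+1)
    (X * (h ^ (i + 2) * (d⁄dX R) g))) (j := i+1) (by omega)
  rw [smul_add, e1]
  have : (i+1) • coeff i (h^(i+2) * d⁄dX R g) = -(coeff (i+1) (h^(i+1)) * (i+1)) := by
    linear_combination -e2
  rw [this]
  rw [nsmul_eq_mul]
  push_cast
  ring


lemma lemA (u v : PowerSeries R) (hu0 : coeff 0 u = 0) (hu1 : coeff 1 u = 1)
    (hv0 : coeff 0 v = 0)
    (hinv : PS.comp v u = PowerSeries.X)
    (g : PowerSeries R) (hg : constantCoeff g = 1) (hXg : u = X * g)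
    (N : ℕ) :
    ((N+2 : ℕ) : R) * coeff (N+2) v =
      coeff (N+1) ((PowerSeries.invOfUnit g 1)^(N+2)) := by
  set h := PowerSeries.invOfUnit g 1 with hh
  have hgh : g * h = 1 := PowerSeries.mul_invOfUnit g 1 (by simpa using hg)
  have hu0' : constantCoeff u = 0 := by
    rw [← PowerSeries.coeff_zero_eq_constantCoeff_apply]; exact hu0
  have hucoeff : ∀ {D k : ℕ}, D < k → coeff D (u^k) = 0 :=
    fun hDk => coeff_pow_eq_zero hu0' hDk
  have hcomp : ∀ M, ∑ j ∈ Finset.range M, coeff (j+1) v * coeff M (u^(j+1)) =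
      coeff M X := by
    intro M
    have h1 := congrArg (coeff M) hinv
    rw [PS.comp, PowerSeries.coeff_mk] at h1
    rw [← h1, Finset.sum_range_succ' (fun k => coeff k v * coeff M (u^k)) M]
    simp [hv0]
  set S := ∑ j ∈ Finset.range (N+2),
      (((j+1 : ℕ) : R) * coeff (j+1) v) • (u^j * d⁄dX R u) with hS
  have hScoeff : ∀ a, a ≤ N+1 → coeff a S = coeff (a+1) X * ((a+1 : ℕ) : R) := by
    intro a ha
    rw [hS, map_sum]
    have hterm : ∀ j ∈ Finset.range (N+2),
        coeff a ((((j+1 : ℕ) : R) * coeff (j+1) v) • (u^j * d⁄dX R u)) =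
          (coeff (j+1) v * coeff (a+1) (u^(j+1))) * ((a+1 : ℕ) : R) := by
      intro j hj
      rw [PowerSeries.coeff_smul, smul_eq_mul]
      have hd : coeff a ((d⁄dX R) (u^(j+1))) = coeff (a+1) (u^(j+1)) * ((a+1:ℕ):R) := by
        have := PowerSeries.coeff_derivative (u^(j+1)) a
        push_cast
        push_cast at this
        exact this
      have hlp : (d⁄dX R) (u^(j+1)) = (j+1 : ℕ) • (u^j * d⁄dX R u) := by
        rw [Derivation.leibniz_pow, smul_eq_mul, Nat.succ_sub_one]
      rw [hlp, map_nsmul, nsmul_eq_mul] at hd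
      calc ((j+1 : ℕ) : R) * coeff (j+1) v * coeff a (u^j * d⁄dX R u)
          = coeff (j+1) v * (((j+1:ℕ):R) * coeff a (u^j * d⁄dX R u)) := by ring
        _ = coeff (j+1) v * (coeff (a+1) (u^(j+1)) * ((a+1:ℕ):R)) := by rw [hd]
        _ = (coeff (j+1) v * coeff (a+1) (u^(j+1))) * ((a+1:ℕ):R) := by ring
    rw [Finset.sum_congr rfl hterm, ← Finset.sum_mul]
    congr 1
    rw [← hcomp (a+1)]
    refine (Finset.sum_subset ?_ ?_).symm
    · intro x hx
      rw [Finset.mem_range] at hx ⊢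
      omega
    · intro x hx hx'
      rw [Finset.mem_range] at hx hx'
      rw [hucoeff (by omega), mul_zero]
  have hW : ∀ b, coeff b (X^(N+1) * h^(N+2)) =
      if N+1 ≤ b then coeff (b - (N+1)) (h^(N+2)) else 0 := fun b =>
    PowerSeries.coeff_X_pow_mul' _ _ _
  have way1 : coeff (2*N+2) (S * (X^(N+1) * h^(N+2))) = coeff (N+1) (h^(N+2)) := by
    rw [PowerSeries.coeff_mul]
    rw [Finset.sum_eq_single_of_mem (0, 2*N+2)
      (by simp [Finset.mem_antidiagonal])]
    · rw [hScoeff 0 (by omega), hW]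
      rw [if_pos (by omega), show 2*N+2 - (N+1) = N+1 by omega]
      rw [PowerSeries.coeff_X, if_pos rfl]
      norm_num
    · rintro ⟨a, b⟩ hab hne
      replace hab : a + b = 2*N+2 := by simpa using hab
      dsimp only
      by_cases hA : a ≤ N+1
      · have ha0 : a ≠ 0 := by
          rintro rfl
          apply hne
          have : b = 2*N+2 := by omega
          rw [this]
        rw [hScoeff a hA, PowerSeries.coeff_X, if_neg (by omega), zero_mul, zero_mul]
      · rw [hW, if_neg (by omega), mul_zero]
  have way2 : coeff (2*N+2) (S * (X^(N+1) * h^(N+2))) =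
      ((N+2 : ℕ) : R) * coeff (N+2) v := by
    rw [hS, Finset.sum_mul, map_sum]
    have hterm2 : ∀ j ∈ Finset.range (N+2),
        coeff (2*N+2) ((((j+1 : ℕ) : R) * coeff (j+1) v) • (u^j * d⁄dX R u) *
          (X^(N+1) * h^(N+2))) =
        (((j+1 : ℕ) : R) * coeff (j+1) v) *
          coeff (N+1-j) (h^(N+2-j) * d⁄dX R u) := by
      intro j hj
      rw [Finset.mem_range] at hj
      rw [smul_mul_assoc, PowerSeries.coeff_smul, smul_eq_mul]
      congr 1
      have hre : u^j * d⁄dX R u * (X^(N+1) * h^(N+2)) =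
          X^(j + (N+1)) * (h^(N+2-j) * d⁄dX R u) := by
        calc u^j * d⁄dX R u * (X^(N+1) * h^(N+2))
            = (X*g)^j * d⁄dX R u * (X^(N+1) * h^(N+2)) := by rw [← hXg]
          _ = X^(j+(N+1)) * ((g^j * h^j) * (h^(N+2-j) * d⁄dX R u)) := by
              have hhn : h^(N+2) = h^j * h^(N+2-j) := by
                rw [← pow_add, show j + (N+2-j) = N+2 by omega]
              rw [mul_pow, pow_add, hhn]
              ring
          _ = X^(j+(N+1)) * (h^(N+2-j) * d⁄dX R u) := by
              rw [← mul_pow, hgh, one_pow, one_mul]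
      rw [hre, PowerSeries.coeff_X_pow_mul', if_pos (by omega),
        show 2*N+2 - (j+(N+1)) = N+1-j by omega]
    rw [Finset.sum_congr rfl hterm2]
    rw [Finset.sum_eq_single_of_mem (N+1) (by rw [Finset.mem_range]; omega)]
    · rw [show N+1-(N+1) = 0 by omega, show N+2-(N+1) = 1 by omega, pow_one]
      have hc0 : coeff 0 (h * d⁄dX R u) = 1 := by
        rw [PowerSeries.coeff_mul]
        rw [Finset.Nat.antidiagonal_zero, Finset.sum_singleton]
        have h1 : coeff 0 h = 1 := by
          rw [hh, PowerSeries.coeff_zero_eq_constantCoeff,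
            PowerSeries.constantCoeff_invOfUnit]
          simp
        have h2 : coeff 0 (d⁄dX R u) = 1 := by
          rw [PowerSeries.coeff_derivative, hu1]
          norm_num
        show coeff 0 h * coeff 0 (d⁄dX R u) = 1
        rw [h1, h2, mul_one]
      rw [hc0, mul_one, show N+1+1 = N+2 by omega]
    · intro j hjmem hne
      rw [Finset.mem_range] at hjmem
      have h1 : 1 ≤ N+1-j := by omega
      have h2 : N+2-j = (N+1-j) + 1 := by omega
      rw [h2, hXg, hh, residue g hg h1, mul_zero]
  rw [← way1, way2]


lemma qsmul_cancel {q : ℚ} (hq : q ≠ 0) {a b : R} (h : q • a = q • b) : a = b := by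
  calc a = (q⁻¹ * q) • a := by rw [inv_mul_cancel₀ hq, one_smul]
    _ = q⁻¹ • (q • a) := by rw [mul_smul]
    _ = q⁻¹ • (q • b) := by rw [h]
    _ = (q⁻¹ * q) • b := by rw [mul_smul]
    _ = b := by rw [inv_mul_cancel₀ hq, one_smul]

lemma hcast (k : ℕ) (z : R) : (k : R) * z = ((k : ℚ)) • z := by
  rw [← nsmul_eq_mul, ← Nat.cast_smul_eq_nsmul ℚ]

end LIPaux

theorem lagrange_inversion_partitions {R : Type*} [CommRing R] [Algebra ℚ R]
    (u v : PowerSeries R)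
    (hu0 : coeff 0 u = 0) (hu1 : coeff 1 u = 1)
    (hv0 : coeff 0 v = 0) (hv1 : coeff 1 v = 1)
    (hinv : PS.comp v u = PowerSeries.X) :
    ∀ n, 2 ≤ n →
      coeff n v =
        ∑ lam : Nat.Partition (n - 1),
          Pcoeff n lam •
            ∏ i ∈ Finset.Icc 1 (n - 1), (-(coeff (i + 1) u)) ^ (lam.parts.count i) := by
  intro n hn
  obtain ⟨N, rfl⟩ : ∃ N, n = N + 2 := ⟨n - 2, by omega⟩
  show coeff (N+2) v =
    ∑ lam : Nat.Partition (N+1),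
      Pcoeff (N+2) lam •
        ∏ i ∈ Finset.Icc 1 (N+1), (-(coeff (i + 1) u)) ^ (lam.parts.count i)
  set g : PowerSeries R := PowerSeries.mk fun i => coeff (i+1) u with hgdef
  have hXg : u = X * g := by
    ext k
    cases k with
    | zero =>
      rw [hu0, PowerSeries.coeff_zero_eq_constantCoeff_apply, map_mul,
        PowerSeries.constantCoeff_X, zero_mul]
    | succ k =>
      rw [PowerSeries.coeff_succ_X_mul, hgdef, PowerSeries.coeff_mk]
  have hg : constantCoeff g = 1 := by
    rw [← PowerSeries.coeff_zero_eq_constantCoeff_apply, hgdef, PowerSeries.coeff_mk]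
    exact hu1
  have hC : constantCoeff (1 - g) = 0 := by
    rw [map_sub, map_one, hg, sub_self]
  have main := LIPaux.lemA u v hu0 hu1 hv0 hinv g hg hXg N
  have hq : ((N+2 : ℕ) : ℚ) ≠ 0 := by positivity
  refine LIPaux.qsmul_cancel hq ?_
  have hkey1 := LIPaux.key1 g hg (N+1) (N+1)
  rw [show N+1+1 = N+2 by omega] at hkey1
  calc ((N+2 : ℕ) : ℚ) • coeff (N+2) v
      = ((N+2 : ℕ) : R) * coeff (N+2) v := (LIPaux.hcast _ _).symm
    _ = coeff (N+1) ((PowerSeries.invOfUnit g 1)^(N+2)) := main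
    _ = ∑ m ∈ Finset.range (N+2), (((N+1+m).choose m : ℕ) : R) *
          coeff (N+1) ((1-g)^m) := hkey1
    _ = ∑ m ∈ Finset.range (N+2), ∑ s ∈ LIPaux.PF (N+1),
          ((((N+1+m).choose m : ℕ) : ℚ) *
            (if Multiset.card s = m then ((m.factorial : ℚ) / LIPaux.fprod (N+1) s) else 0)) •
          ∏ i ∈ Finset.Icc 1 (N+1), (coeff i (1-g)) ^ (s.count i) := by
        refine Finset.sum_congr rfl fun m hm => ?_
        rw [LIPaux.coeff_pow_eq_sum_PF (1-g) hC (N+1) m (N+1) le_rfl, LIPaux.hcast,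
          Finset.smul_sum]
        refine Finset.sum_congr rfl fun s hs => ?_
        rw [smul_smul]
    _ = ∑ s ∈ LIPaux.PF (N+1),
          ((((N+1+Multiset.card s).choose (Multiset.card s) : ℕ) : ℚ) *
            (((Multiset.card s).factorial : ℚ) / LIPaux.fprod (N+1) s)) •
          ∏ i ∈ Finset.Icc 1 (N+1), (coeff i (1-g)) ^ (s.count i) := by
        rw [Finset.sum_comm]
        refine Finset.sum_congr rfl fun s hs => ?_
        rw [Finset.sum_eq_single_of_mem (Multiset.card s)
          (by rw [Finset.mem_range]
              have := LIPaux.card_le_of_mem_PF hs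
              omega)]
        · rw [if_pos rfl]
        · intro m hm hne
          rw [if_neg (fun hc => hne hc.symm), mul_zero, zero_smul]
    _ = ∑ lam : Nat.Partition (N+1),
          ((((N+1+lam.parts.card).choose lam.parts.card : ℕ) : ℚ) *
            ((lam.parts.card.factorial : ℚ) / LIPaux.fprod (N+1) lam.parts)) •
          ∏ i ∈ Finset.Icc 1 (N+1), (coeff i (1-g)) ^ (lam.parts.count i) := by
        rw [LIPaux.PF, Finset.sum_image (fun x _ y _ h => Nat.Partition.ext h)]
    _ = ((N+2 : ℕ) : ℚ) • ∑ lam : Nat.Partition (N+1),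
          Pcoeff (N+2) lam •
            ∏ i ∈ Finset.Icc 1 (N+1), (-(coeff (i + 1) u)) ^ (lam.parts.count i) := by
        rw [Finset.smul_sum]
        refine Finset.sum_congr rfl fun lam _ => ?_
        have hci : ∀ i ∈ Finset.Icc 1 (N+1),
            (coeff i (1-g)) ^ (lam.parts.count i) =
            (-(coeff (i+1) u)) ^ (lam.parts.count i) := by
          intro i hi
          rw [Finset.mem_Icc] at hi
          rw [map_sub, PowerSeries.coeff_one, if_neg (by omega), hgdef,
            PowerSeries.coeff_mk, zero_sub]
        rw [Finset.prod_congr rfl hci, smul_smul]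
        congr 1
        -- scalar identity in ℚ
        have hF : LIPaux.fprod (N+1) lam.parts ≠ 0 := (LIPaux.fprod_pos _ _).ne'
        set L := lam.parts.card with hL
        have hch : (((N+1+L).choose L : ℕ) : ℚ) =
            ((N+1+L).factorial : ℚ) / ((L.factorial : ℚ) * ((N+1).factorial : ℚ)) := by
          rw [Nat.cast_choose ℚ (by omega : L ≤ N+1+L), show N+1+L-L = N+1 by omega]
        have hfact : ((N+2).factorial : ℚ) = ((N+2 : ℕ) : ℚ) * ((N+1).factorial : ℚ) := by
          rw [show N+2 = (N+1)+1 by omega, Nat.factorial_succ]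
          push_cast
          ring
        rw [Pcoeff]
        show (((N+1+L).choose L : ℕ) : ℚ) * ((L.factorial : ℚ) / LIPaux.fprod (N+1) lam.parts)
          = ((N+2 : ℕ) : ℚ) *
            (((N+1+L).factorial : ℚ) /
              (((N+2).factorial : ℚ) * LIPaux.fprod (N+1) lam.parts))
        rw [hch, hfact]
        have hfac1 : ((N+1).factorial : ℚ) ≠ 0 := by
          exact_mod_cast (Nat.factorial_pos _).ne'
        have hfac2 : ((L).factorial : ℚ) ≠ 0 := by
          exact_mod_cast (Nat.factorial_pos _).ne'
        have hN2 : ((N+2 : ℕ) : ℚ) ≠ 0 := hq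
        field_simp
end

section
/- Define d_n \in \mathbb{Z} by d_n = \sum_{\lambda\vdash n-1} P(\lambda) \prod_{i\ge1} ((-1)^i i!)^{\lambda_i} where P(\lambda) = (n-1+\sum_i\lambda_i)!/(n!\prod_i\lambda_i!) for partitions of n-1. Then (-1)^{n-1} d_n > 0 for all n \ge 2, i.e., the middle Betti numbers \dim H^{n-3}(\mathcal{M}^\delta_{0,n}) given by formula (9) of the paper are positive. -/
open Finset

/-- `d_n = ∑_{λ ⊢ n-1} P(λ) ∏ᵢ ((-1)ⁱ i!)^{λᵢ}`. -/
noncomputable def dSum (n : ℕ) : ℚ :=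
  ∑ lam : Nat.Partition (n - 1),
    Pcoeff n lam *
      ∏ i ∈ Finset.Icc 1 (n - 1), (((-1 : ℚ) ^ i * i.factorial)) ^ (lam.parts.count i)

/-- Sum of a multiset of naturals as a weighted count over any superset of its support. -/
lemma multiset_sum_eq (m : Multiset ℕ) (t : Finset ℕ) (h : ∀ a ∈ m, a ∈ t) :
    ∑ a ∈ t, a * m.count a = m.sum := by
  classical
  have h1 : (m.map id).sum = ∑ a ∈ m.toFinset, m.count a • id a :=
    Finset.sum_multiset_map_count m id
  simp only [Multiset.map_id', id_eq, smul_eq_mul] at h1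
  rw [h1, Finset.sum_subset (fun a ha => h a (Multiset.mem_toFinset.mp ha))]
  · exact Finset.sum_congr rfl fun a _ => mul_comm _ _
  · intro a _ ha
    simp [Multiset.count_eq_zero_of_notMem (by simpa using ha)]

/-- The key divisibility: if `∑ i·mᵢ = n-1` then `n! ∏ mᵢ!` divides `(n-1+∑ mᵢ)!`. -/
lemma key_dvd (n : ℕ) (hn : 2 ≤ n) (m : ℕ → ℕ)
    (hs : ∑ i ∈ Icc 1 (n - 1), i * m i = n - 1) :
    (n.factorial * ∏ i ∈ Icc 1 (n - 1), (m i).factorial) ∣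
      (n - 1 + ∑ i ∈ Icc 1 (n - 1), m i).factorial := by
  classical
  set s : Finset ℕ := Icc 1 (n - 1) with hsdef
  set L : ℕ := ∑ i ∈ s, m i with hL
  set N : ℕ := n - 1 + L with hN
  set D : ℕ := n.factorial * ∏ i ∈ s, (m i).factorial with hD
  have h0 : (0 : ℕ) ∉ s := by simp [hsdef]
  -- Step A : D ∣ n * N!
  have stepA : D ∣ n * N.factorial := by
    have hdvd : ((n - 1).factorial * ∏ i ∈ s, (m i).factorial) ∣ N.factorial := by
      have := Nat.prod_factorial_dvd_factorial_sum (insert 0 s)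
        (fun i => if i = 0 then n - 1 else m i)
      rw [Finset.prod_insert h0, Finset.sum_insert h0, if_pos rfl] at this
      have hp : ∏ i ∈ s, (if i = 0 then n - 1 else m i).factorial
          = ∏ i ∈ s, (m i).factorial :=
        Finset.prod_congr rfl fun i hi => by
          rw [if_neg (by rintro rfl; exact h0 hi)]
      have hq : ∑ i ∈ s, (if i = 0 then n - 1 else m i) = L :=
        Finset.sum_congr rfl fun i hi => by
          rw [if_neg (by rintro rfl; exact h0 hi)]
      rwa [hp, hq, ← hN] at this
    have hfac : n * (n - 1).factorial = n.factorial := by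
      rw [show n.factorial = (n - 1 + 1).factorial by congr 1; omega, Nat.factorial_succ]
      congr 1
      omega
    calc D = n * ((n - 1).factorial * ∏ i ∈ s, (m i).factorial) := by
            rw [hD, ← mul_assoc, hfac]
      _ ∣ n * N.factorial := mul_dvd_mul_left n hdvd
  -- Step B : for each j ∈ s, D ∣ m j * N!
  have stepB : ∀ j ∈ s, D ∣ m j * N.factorial := by
    intro j hj
    rcases Nat.eq_zero_or_pos (m j) with hz | hpos
    · simp [hz]
    · have hdvd : (n.factorial * ((m j - 1).factorial * ∏ i ∈ s.erase j, (m i).factorial))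
          ∣ N.factorial := by
        have := Nat.prod_factorial_dvd_factorial_sum (insert 0 s)
          (fun i => if i = 0 then n else if i = j then m j - 1 else m i)
        rw [Finset.prod_insert h0, Finset.sum_insert h0, if_pos rfl] at this
        have hp : ∏ i ∈ s, (if i = 0 then n else if i = j then m j - 1 else m i).factorial
            = (m j - 1).factorial * ∏ i ∈ s.erase j, (m i).factorial := by
          rw [← Finset.mul_prod_erase s _ hj, if_neg (by rintro rfl; exact h0 hj), if_pos rfl]
          congr 1
          refine Finset.prod_congr rfl fun i hi => ?_
          rw [if_neg (by rintro rfl; exact h0 (Finset.mem_of_mem_erase hi)),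
            if_neg (Finset.ne_of_mem_erase hi)]
        have hq : ∑ i ∈ s, (if i = 0 then n else if i = j then m j - 1 else m i)
            = (m j - 1) + ∑ i ∈ s.erase j, m i := by
          rw [← Finset.add_sum_erase s _ hj, if_neg (by rintro rfl; exact h0 hj), if_pos rfl]
          congr 1
          refine Finset.sum_congr rfl fun i hi => ?_
          rw [if_neg (by rintro rfl; exact h0 (Finset.mem_of_mem_erase hi)),
            if_neg (Finset.ne_of_mem_erase hi)]
        have hLsplit : L = m j + ∑ i ∈ s.erase j, m i := (Finset.add_sum_erase s _ hj).symm
        have hNeq : n + ((m j - 1) + ∑ i ∈ s.erase j, m i) = N := by omega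
        rwa [hp, hq, hNeq] at this
      have hDeq : D = m j * (n.factorial *
          ((m j - 1).factorial * ∏ i ∈ s.erase j, (m i).factorial)) := by
        rw [hD, ← Finset.mul_prod_erase s _ hj,
          show (m j).factorial = m j * (m j - 1).factorial by
            conv_lhs => rw [show (m j) = (m j - 1 + 1) by omega, Nat.factorial_succ]
            congr 1
            omega]
        ring
      rw [hDeq]
      exact mul_dvd_mul_left (m j) hdvd
  -- Step C : gcd argument
  have hg : D ∣ s.gcd m * N.factorial := by
    have h1 : D ∣ s.gcd (fun j => m j * N.factorial) := Finset.dvd_gcd stepB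
    have h2 : s.gcd (fun j => m j * N.factorial) = s.gcd m * N.factorial := by
      rw [Finset.gcd_mul_right]; simp
    rwa [h2] at h1
  have hco : Nat.Coprime n (s.gcd m) := by
    have hg1 : s.gcd m ∣ n - 1 := by
      rw [← hs]
      exact Finset.dvd_sum fun i hi => Dvd.dvd.mul_left (Finset.gcd_dvd hi) i
    exact Nat.Coprime.coprime_dvd_right hg1
      (by simp [Nat.coprime_self_sub_right (by omega : 1 ≤ n)])
  have hfin := Nat.dvd_gcd stepA hg
  rwa [Nat.gcd_mul_right, Nat.Coprime.gcd_eq_one hco, one_mul] at hfin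

theorem dSum_integer_and_sign (n : ℕ) (hn : 2 ≤ n) :
    (∃ z : ℤ, (z : ℚ) = dSum n) ∧ 0 < (-1 : ℚ) ^ (n - 1) * dSum n := by
  classical
  have hmem : ∀ lam : Nat.Partition (n - 1), ∀ a ∈ lam.parts, a ∈ Icc 1 (n - 1) := by
    intro lam a ha
    exact mem_Icc.mpr ⟨lam.parts_pos ha, (Multiset.le_sum_of_mem ha).trans_eq lam.parts_sum⟩
  have hsum : ∀ lam : Nat.Partition (n - 1),
      ∑ i ∈ Icc 1 (n - 1), i * lam.parts.count i = n - 1 := fun lam => by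
    rw [multiset_sum_eq _ _ (hmem lam), lam.parts_sum]
  set e : Nat.Partition (n - 1) → ℕ := fun lam =>
    ((n - 1 + lam.parts.card).factorial /
        (n.factorial * ∏ i ∈ Icc 1 (n - 1), (lam.parts.count i).factorial)) *
      ∏ i ∈ Icc 1 (n - 1), (i.factorial) ^ (lam.parts.count i) with he
  have hterm : ∀ lam : Nat.Partition (n - 1),
      Pcoeff n lam * ∏ i ∈ Icc 1 (n - 1), ((-1 : ℚ) ^ i * i.factorial) ^ (lam.parts.count i)
        = (-1 : ℚ) ^ (n - 1) * (e lam : ℚ) := by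
    intro lam
    have hcard : ∑ i ∈ Icc 1 (n - 1), Multiset.count i lam.parts = Multiset.card lam.parts :=
      Multiset.sum_count_eq_card (hmem lam)
    have hdvd : (n.factorial * ∏ i ∈ Icc 1 (n - 1), (Multiset.count i lam.parts).factorial) ∣
        (n - 1 + Multiset.card lam.parts).factorial := by
      rw [← hcard]; exact key_dvd n hn (fun i => Multiset.count i lam.parts) (hsum lam)
    have hD0 : ((n.factorial * ∏ i ∈ Icc 1 (n - 1), (lam.parts.count i).factorial : ℕ) : ℚ) ≠ 0 :=
      Nat.cast_ne_zero.mpr (by positivity)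
    have hP : Pcoeff n lam = (((n - 1 + lam.parts.card).factorial /
        (n.factorial * ∏ i ∈ Icc 1 (n - 1), (lam.parts.count i).factorial) : ℕ) : ℚ) := by
      rw [Nat.cast_div hdvd hD0, Pcoeff]
      push_cast
      ring
    have hprod : ∏ i ∈ Icc 1 (n - 1), ((-1 : ℚ) ^ i * (i.factorial : ℚ)) ^ (lam.parts.count i)
        = (-1 : ℚ) ^ (n - 1) *
          ∏ i ∈ Icc 1 (n - 1), ((i.factorial : ℚ)) ^ (lam.parts.count i) := by
      simp only [mul_pow, ← pow_mul]
      rw [Finset.prod_mul_distrib, Finset.prod_pow_eq_pow_sum, hsum lam]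
    rw [hP, hprod, he]
    push_cast
    ring
  have hdsum : dSum n = (-1 : ℚ) ^ (n - 1) * ((∑ lam : Nat.Partition (n - 1), e lam : ℕ) : ℚ) := by
    rw [dSum, Finset.sum_congr rfl fun lam _ => hterm lam, ← Finset.mul_sum]
    push_cast
    ring
  have hE : 0 < ∑ lam : Nat.Partition (n - 1), e lam := by
    refine Finset.sum_pos (fun lam _ => ?_) Finset.univ_nonempty
    have hcard : ∑ i ∈ Icc 1 (n - 1), Multiset.count i lam.parts = Multiset.card lam.parts :=
      Multiset.sum_count_eq_card (hmem lam)
    have hdvd : (n.factorial * ∏ i ∈ Icc 1 (n - 1), (Multiset.count i lam.parts).factorial) ∣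
        (n - 1 + Multiset.card lam.parts).factorial := by
      rw [← hcard]; exact key_dvd n hn (fun i => Multiset.count i lam.parts) (hsum lam)
    have h1 : 0 < (n - 1 + lam.parts.card).factorial /
        (n.factorial * ∏ i ∈ Icc 1 (n - 1), (lam.parts.count i).factorial) :=
      Nat.div_pos (Nat.le_of_dvd (Nat.factorial_pos _) hdvd) (by positivity)
    have h2 : 0 < ∏ i ∈ Icc 1 (n - 1), (i.factorial) ^ (lam.parts.count i) := by positivity
    exact Nat.mul_pos h1 h2
  constructor
  · refine ⟨(-1) ^ (n - 1) * (∑ lam : Nat.Partition (n - 1), e lam : ℕ), ?_⟩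
    rw [hdsum]
    push_cast
    ring
  · rw [hdsum, ← mul_assoc, ← pow_add]
    rw [Even.neg_one_pow ⟨n - 1, rfl⟩, one_mul]
    exact_mod_cast hE
end
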